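/- arXiv:1909.05900 — 6 statements merged into one kernel-verified Lean document; each statement's English description precedes it below -/
import Mathlib

section
/- Let r : ℝ → (0,∞) be a 2π-periodic C¹ function giving a convex body K in polar coordinates whose centroid is at the origin. Then the derivative r' has at least four zeros in [0, 2π). -/
open Real

namespace FourEq

/-- A continuous nonpositive function that is negative at an interior point has
negative integral. -/
lemma integral_neg_of_nonpos {f : ℝ → ℝ} (hf : Continuous f) {a b x : ℝ}
    (hx : x ∈ Set.Ioo a b) (hnp : ∀ t ∈ Set.Icc a b, f t ≤ 0)
    (hxneg : f x < 0) : (∫ t in a..b, f t) < 0 := by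
  obtain ⟨hax, hxb⟩ := hx
  have hopen : IsOpen ({t | f t < 0} ∩ Set.Ioo a b) :=
    (isOpen_lt hf continuous_const).inter isOpen_Ioo
  have hxmem : x ∈ {t | f t < 0} ∩ Set.Ioo a b := ⟨hxneg, hax, hxb⟩
  obtain ⟨δ, hδ, hball⟩ := Metric.isOpen_iff.1 hopen x hxmem
  set c := x - δ/2 with hc
  set d := x + δ/2 with hd
  have hcd : ∀ t ∈ Set.Icc c d, f t < 0 ∧ t ∈ Set.Ioo a b := by
    intro t ht
    have htb : t ∈ Metric.ball x δ := by
      rw [Real.ball_eq_Ioo]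
      exact ⟨by simp only [hc] at ht; linarith [ht.1], by simp only [hd] at ht; linarith [ht.2]⟩
    exact hball htb
  have hcdlt : c < d := by simp only [hc, hd]; linarith
  have hcmem := hcd c ⟨le_refl c, hcdlt.le⟩
  have hdmem := hcd d ⟨hcdlt.le, le_refl d⟩
  have hac : a < c := hcmem.2.1
  have hdb : d < b := hdmem.2.2
  have h1 : (∫ t in a..c, f t) ≤ 0 := by
    have := intervalIntegral.integral_nonneg (f := fun t => -f t) (μ := MeasureTheory.volume)
      hac.le (fun t ht => neg_nonneg.2 (hnp t ⟨ht.1, by linarith [ht.2]⟩))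
    rw [intervalIntegral.integral_neg] at this
    linarith
  have h3 : (∫ t in d..b, f t) ≤ 0 := by
    have := intervalIntegral.integral_nonneg (f := fun t => -f t) (μ := MeasureTheory.volume)
      hdb.le (fun t ht => neg_nonneg.2 (hnp t ⟨by linarith [ht.1], ht.2⟩))
    rw [intervalIntegral.integral_neg] at this
    linarith
  have h2 : (∫ t in c..d, f t) < 0 := by
    have := intervalIntegral.intervalIntegral_pos_of_pos_on
      ((hf.neg).intervalIntegrable c d)
      (fun t ht => neg_pos.2 (hcd t (Set.Ioo_subset_Icc_self ht)).1) hcdlt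
    simp only [Pi.neg_apply, intervalIntegral.integral_neg] at this
    linarith
  have e1 : (∫ t in a..b, f t) =
      (∫ t in a..c, f t) + ((∫ t in c..d, f t) + (∫ t in d..b, f t)) := by
    rw [intervalIntegral.integral_add_adjacent_intervals (hf.intervalIntegrable c d)
      (hf.intervalIntegrable d b)]
    rw [intervalIntegral.integral_add_adjacent_intervals (hf.intervalIntegrable a c)
      (hf.intervalIntegrable c b)]
  rw [e1]
  linarith

/-- A continuous function with no zeros on an open interval has constant sign. -/
lemma sign_const {f : ℝ → ℝ} (hf : Continuous f) {a b : ℝ}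
    (h : ∀ t ∈ Set.Ioo a b, f t ≠ 0) :
    (∀ t ∈ Set.Ioo a b, 0 < f t) ∨ (∀ t ∈ Set.Ioo a b, f t < 0) := by
  by_contra hcon
  push_neg at hcon
  obtain ⟨⟨s, hs, hs'⟩, ⟨t, ht, ht'⟩⟩ := hcon
  have hfs : f s < 0 := lt_of_le_of_ne hs' (h s hs)
  have hft : 0 < f t := lt_of_le_of_ne ht' (Ne.symm (h t ht))
  have hsub : Set.uIcc s t ⊆ Set.Ioo a b := Set.ordConnected_Ioo.uIcc_subset hs ht
  have h0 : (0:ℝ) ∈ Set.uIcc (f s) (f t) := Set.mem_uIcc.2 (Or.inl ⟨hfs.le, hft.le⟩)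
  obtain ⟨z, hz, hz0⟩ := intermediate_value_uIcc (hf.continuousOn) h0
  exact h z (hsub hz) hz0

lemma per_shift {f : ℝ → ℝ} (hf : Function.Periodic f (2*π)) (p : ℝ) :
    (∫ t in p..(p+2*π), f t) = ∫ t in (0:ℝ)..(2*π), f t := by
  simpa using hf.intervalIntegral_add_eq p 0

lemma icc_nonneg_of_ioo {f : ℝ → ℝ} {a b : ℝ} (hfa : f a = 0) (hfb : f b = 0)
    (h : ∀ t ∈ Set.Ioo a b, 0 < f t) : ∀ t ∈ Set.Icc a b, 0 ≤ f t := by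
  intro t ht
  rcases eq_or_lt_of_le ht.1 with h1 | h1
  · have : f t = 0 := by rw [← h1]; exact hfa
    linarith
  · rcases eq_or_lt_of_le ht.2 with h2 | h2
    · have : f t = 0 := by rw [h2]; exact hfb
      linarith
    · exact (h t ⟨h1, h2⟩).le

lemma icc_nonpos_of_ioo {f : ℝ → ℝ} {a b : ℝ} (hfa : f a = 0) (hfb : f b = 0)
    (h : ∀ t ∈ Set.Ioo a b, f t < 0) : ∀ t ∈ Set.Icc a b, f t ≤ 0 := by
  intro t ht
  rcases eq_or_lt_of_le ht.1 with h1 | h1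
  · have : f t = 0 := by rw [← h1]; exact hfa
    linarith
  · rcases eq_or_lt_of_le ht.2 with h2 | h2
    · have : f t = 0 := by rw [h2]; exact hfb
      linarith
    · exact (h t ⟨h1, h2⟩).le

end FourEq
namespace FourEq2

variable {u : ℝ → ℝ}

lemma all_nonneg_contra (hu : Continuous u) (hper : Function.Periodic u (2*π))
    (h0 : (∫ t in (0:ℝ)..(2*π), u t) = 0) {p x : ℝ}
    (hx : x ∈ Set.Ioo p (p+2*π)) (hxpos : 0 < u x)
    (hnn : ∀ t ∈ Set.Icc p (p+2*π), 0 ≤ u t) : False := by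
  have h := FourEq.integral_neg_of_nonpos (hu.neg) hx
    (fun t ht => neg_nonpos.2 (hnn t ht)) (neg_lt_zero.2 hxpos)
  simp only [Pi.neg_apply, intervalIntegral.integral_neg] at h
  rw [FourEq.per_shift hper, h0] at h
  simp at h

lemma key (hu : Continuous u) (hper : Function.Periodic u (2*π))
    (h0 : (∫ t in (0:ℝ)..(2*π), u t) = 0)
    (hC : (∫ t in (0:ℝ)..(2*π), u t * Real.cos t) = 0)
    (hS : (∫ t in (0:ℝ)..(2*π), u t * Real.sin t) = 0)
    {p q x : ℝ} (hpq : p < q) (hq2 : q < p + 2*π)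
    (hxm : x ∈ Set.Ioo p q) (hxpos : 0 < u x)
    (hnn : ∀ t ∈ Set.Icc p q, 0 ≤ u t)
    (hnp : ∀ t ∈ Set.Icc q (p + 2*π), u t ≤ 0) : False := by
  set c1 : ℝ := Real.cos ((q-p)/2) / 2 with hc1def
  set c2 : ℝ := Real.cos ((p+q)/2) / 2 with hc2def
  set c3 : ℝ := Real.sin ((p+q)/2) / 2 with hc3def
  set T : ℝ → ℝ := fun t => Real.sin ((t-p)/2) * Real.sin ((t-q)/2) with hTdef
  have hTval : ∀ t, T t = c1 - c2 * Real.cos t - c3 * Real.sin t := by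
    intro t
    have h := Real.cos_sub_cos ((q-p)/2) (t - (p+q)/2)
    have e1 : ((q-p)/2 + (t - (p+q)/2))/2 = (t-p)/2 := by ring
    have e2 : ((q-p)/2 - (t - (p+q)/2))/2 = -((t-q)/2) := by ring
    rw [e1, e2, Real.sin_neg] at h
    have h2 : Real.cos (t - (p+q)/2)
        = Real.cos t * Real.cos ((p+q)/2) + Real.sin t * Real.sin ((p+q)/2) :=
      Real.cos_sub t ((p+q)/2)
    rw [h2] at h
    simp only [hTdef, hc1def, hc2def, hc3def]
    linear_combination (-1/2 : ℝ) * h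
  have hTcont : Continuous T := by
    apply Continuous.mul <;> exact Real.continuous_sin.comp (by fun_prop)
  have I1 : IntervalIntegrable (fun t => c1 * u t) MeasureTheory.volume p (p+2*π) :=
    (continuous_const.mul hu).intervalIntegrable _ _
  have I2 : IntervalIntegrable (fun t => c2 * (u t * Real.cos t)) MeasureTheory.volume p (p+2*π) :=
    (continuous_const.mul (hu.mul Real.continuous_cos)).intervalIntegrable _ _
  have I3 : IntervalIntegrable (fun t => c3 * (u t * Real.sin t)) MeasureTheory.volume p (p+2*π) :=
    (continuous_const.mul (hu.mul Real.continuous_sin)).intervalIntegrable _ _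
  have hpc : Function.Periodic (fun t => u t * Real.cos t) (2*π) := fun t => by
    simp [hper t, Real.cos_periodic t]
  have hps : Function.Periodic (fun t => u t * Real.sin t) (2*π) := fun t => by
    simp [hper t, Real.sin_periodic t]
  have hint0 : (∫ t in p..(p+2*π), u t * T t) = 0 := by
    have hcongr : Set.EqOn (fun t => u t * T t)
        (fun t => c1 * u t - c2 * (u t * Real.cos t) - c3 * (u t * Real.sin t))
        (Set.uIcc p (p+2*π)) := by
      intro t _
      simp only
      rw [hTval t]; ring
    rw [intervalIntegral.integral_congr hcongr]
    rw [intervalIntegral.integral_sub (I1.sub I2) I3, intervalIntegral.integral_sub I1 I2,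
      intervalIntegral.integral_const_mul, intervalIntegral.integral_const_mul,
      intervalIntegral.integral_const_mul,
      FourEq.per_shift hper, FourEq.per_shift hpc, FourEq.per_shift hps, h0, hC, hS]
    ring
  have hsign : ∀ t ∈ Set.Icc p (p+2*π), u t * T t ≤ 0 := by
    intro t ht
    rcases le_total t q with h1 | h1
    · have hut : 0 ≤ u t := hnn t ⟨ht.1, h1⟩
      have hs1 : 0 ≤ Real.sin ((t-p)/2) :=
        Real.sin_nonneg_of_nonneg_of_le_pi (by linarith [ht.1]) (by linarith)
      have hs2 : Real.sin ((t-q)/2) ≤ 0 := by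
        have hge : 0 ≤ Real.sin ((q-t)/2) :=
          Real.sin_nonneg_of_nonneg_of_le_pi (by linarith) (by linarith [ht.1])
        rw [show (t-q)/2 = -((q-t)/2) by ring, Real.sin_neg]
        linarith
      have hTt : T t ≤ 0 := by
        simp only [hTdef]
        exact mul_nonpos_iff.2 (Or.inl ⟨hs1, hs2⟩)
      exact mul_nonpos_iff.2 (Or.inl ⟨hut, hTt⟩)
    · have hut : u t ≤ 0 := hnp t ⟨h1, ht.2⟩
      have hs1 : 0 ≤ Real.sin ((t-p)/2) :=
        Real.sin_nonneg_of_nonneg_of_le_pi (by linarith [ht.1]) (by linarith [ht.2])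
      have hs2 : 0 ≤ Real.sin ((t-q)/2) :=
        Real.sin_nonneg_of_nonneg_of_le_pi (by linarith) (by linarith [ht.2])
      have hTt : 0 ≤ T t := by
        simp only [hTdef]
        exact mul_nonneg hs1 hs2
      exact mul_nonpos_iff.2 (Or.inr ⟨hut, hTt⟩)
  have hxneg : u x * T x < 0 := by
    have hs1 : 0 < Real.sin ((x-p)/2) :=
      Real.sin_pos_of_pos_of_lt_pi (by linarith [hxm.1]) (by linarith [hxm.2])
    have hs2 : Real.sin ((x-q)/2) < 0 := by
      have hgt : 0 < Real.sin ((q-x)/2) :=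
        Real.sin_pos_of_pos_of_lt_pi (by linarith [hxm.2]) (by linarith [hxm.1])
      rw [show (x-q)/2 = -((q-x)/2) by ring, Real.sin_neg]
      linarith
    have hTx : T x < 0 := by
      simp only [hTdef]
      exact mul_neg_of_pos_of_neg hs1 hs2
    exact mul_neg_of_pos_of_neg hxpos hTx
  have hlt := FourEq.integral_neg_of_nonpos (hu.mul hTcont)
    (⟨hxm.1, by linarith [hxm.2]⟩ : x ∈ Set.Ioo p (p+2*π)) hsign hxneg
  exact absurd hint0 (ne_of_lt hlt)

end FourEq2
namespace FourEq3

lemma mod_mem (t : ℝ) : toIcoMod Real.two_pi_pos 0 t ∈ Set.Ico (0:ℝ) (2*π) :=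
  toIcoMod_mem_Ico' _ t

lemma mod_eq {f : ℝ → ℝ} (hf : Function.Periodic f (2*π)) (a t : ℝ) :
    f (toIcoMod Real.two_pi_pos a t) = f t := by
  rw [toIcoMod]
  exact hf.sub_zsmul_eq _

lemma mod_mem' (a t : ℝ) : toIcoMod Real.two_pi_pos a t ∈ Set.Ico a (a + 2*π) :=
  toIcoMod_mem_Ico _ a t

lemma mod_inj {s a b : ℝ} (ha : a ∈ Set.Ico s (s+2*π)) (hb : b ∈ Set.Ico s (s+2*π))
    (h : toIcoMod Real.two_pi_pos 0 a = toIcoMod Real.two_pi_pos 0 b) : a = b := by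
  obtain ⟨n, hn⟩ := (toIcoMod_eq_toIcoMod _).1 h
  rw [zsmul_eq_mul] at hn
  have habs : |b - a| < 2*π := by
    rw [abs_sub_lt_iff]
    constructor <;> [linarith [hb.1, hb.2, ha.1, ha.2]; linarith [hb.1, hb.2, ha.1, ha.2]]
  have hn0 : n = 0 := by
    by_contra hne
    have h1 : (1:ℝ) ≤ |(n:ℝ)| := by
      have := Int.one_le_abs hne
      exact_mod_cast this
    rw [hn, abs_mul, abs_of_pos Real.two_pi_pos] at habs
    nlinarith [Real.two_pi_pos]
  rw [hn0] at hn
  simp at hn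
  linarith
end FourEq3

theorem four_equilibria
    (r : ℝ → ℝ) (hpos : ∀ φ, 0 < r φ)
    (hper : Function.Periodic r (2 * π)) (hr : ContDiff ℝ 1 r)
    (hc1 : (∫ φ in (0:ℝ)..(2 * π), r φ ^ 3 * Real.cos φ) = 0)
    (hc2 : (∫ φ in (0:ℝ)..(2 * π), r φ ^ 3 * Real.sin φ) = 0) :
    ∃ A : Finset ℝ, 4 ≤ A.card ∧ ∀ φ ∈ A, φ ∈ Set.Ico (0:ℝ) (2 * π) ∧ deriv r φ = 0 := by
  have hgc : ContDiff ℝ 1 (fun φ => r φ ^ 3) := hr.pow 3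
  set g : ℝ → ℝ := fun φ => r φ ^ 3 with hgdef
  set u : ℝ → ℝ := deriv g with hudef
  have hgd : Differentiable ℝ g := hgc.differentiable one_ne_zero
  have hrd : Differentiable ℝ r := hr.differentiable one_ne_zero
  have hucont : Continuous u := hgc.continuous_deriv le_rfl
  have hgper : Function.Periodic g (2*π) := by
    intro t
    simp only [hgdef]
    rw [hper t]
  have hder : ∀ t, HasDerivAt g (3 * r t ^ 2 * deriv r t) t := by
    intro t
    have h := ((hrd t).hasDerivAt).pow 3
    norm_num at h
    exact h
  have hueq : ∀ t, u t = 3 * r t ^ 2 * deriv r t := fun t => (hder t).deriv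
  have hz : ∀ t, u t = 0 → deriv r t = 0 := by
    intro t h
    have h2 := hueq t
    rw [h] at h2
    have h3 : 0 < 3 * r t ^ 2 := by nlinarith [hpos t]
    rcases mul_eq_zero.mp h2.symm with h4 | h4
    · exact absurd h4 h3.ne'
    · exact h4
  have huper : Function.Periodic u (2*π) := by
    intro t
    have h1 : (fun y => g (y + 2*π)) = g := funext fun y => hgper y
    calc u (t + 2*π) = deriv (fun y => g (y + 2*π)) t := (deriv_comp_add_const g (2*π) t).symm
      _ = deriv g t := by rw [h1]
  have hg2π : g (2*π) = g 0 := by simpa using hgper 0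
  have h0 : (∫ t in (0:ℝ)..(2*π), u t) = 0 := by
    have h := intervalIntegral.integral_deriv_eq_sub (f := g) (a := (0:ℝ)) (b := 2*π)
      (fun t _ => hgd t) (hucont.intervalIntegrable _ _)
    rw [hudef]
    rw [h, hg2π, sub_self]
  have hC : (∫ t in (0:ℝ)..(2*π), u t * Real.cos t) = 0 := by
    have hparts := intervalIntegral.integral_deriv_mul_eq_sub (a := (0:ℝ)) (b := 2*π)
      (u := g) (v := Real.cos) (u' := deriv g) (v' := fun t => -Real.sin t)
      (fun t _ => (hgd t).hasDerivAt) (fun t _ => Real.hasDerivAt_cos t)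
      (hucont.intervalIntegrable _ _) ((Real.continuous_sin.neg).intervalIntegrable _ _)
    rw [intervalIntegral.integral_add (f := fun t => deriv g t * Real.cos t)
      (g := fun t => g t * -Real.sin t) ((hucont.mul Real.continuous_cos).intervalIntegrable _ _)
      ((hgc.continuous.mul Real.continuous_sin.neg).intervalIntegrable _ _)] at hparts
    have e1 : (∫ t in (0:ℝ)..(2*π), g t * (-Real.sin t)) = 0 := by
      have e : (fun t => g t * (-Real.sin t)) = fun t => -(r t ^ 3 * Real.sin t) := by
        funext t
        simp only [hgdef]
        ring
      rw [e, intervalIntegral.integral_neg, hc2, neg_zero]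
    rw [Real.cos_two_pi, Real.cos_zero, hg2π, e1] at hparts
    rw [hudef]
    linarith
  have hS : (∫ t in (0:ℝ)..(2*π), u t * Real.sin t) = 0 := by
    have hparts := intervalIntegral.integral_deriv_mul_eq_sub (a := (0:ℝ)) (b := 2*π)
      (u := g) (v := Real.sin) (u' := deriv g) (v' := Real.cos)
      (fun t _ => (hgd t).hasDerivAt) (fun t _ => Real.hasDerivAt_sin t)
      (hucont.intervalIntegrable _ _) (Real.continuous_cos.intervalIntegrable _ _)
    rw [intervalIntegral.integral_add (f := fun t => deriv g t * Real.sin t)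
      (g := fun t => g t * Real.cos t) ((hucont.mul Real.continuous_sin).intervalIntegrable _ _)
      ((hgc.continuous.mul Real.continuous_cos).intervalIntegrable _ _)] at hparts
    have e1 : (∫ t in (0:ℝ)..(2*π), g t * Real.cos t) = 0 := by
      have e : (fun t => g t * Real.cos t) = fun t => r t ^ 3 * Real.cos t := by
        funext t
        simp only [hgdef]
      rw [e, hc1]
    rw [Real.sin_two_pi, Real.sin_zero, e1] at hparts
    rw [hudef]
    linarith
  -- builder: four distinct zeros of u in a single period window give the conclusion
  have build : ∀ (s t₁ t₂ t₃ t₄ : ℝ), t₁ ∈ Set.Ico s (s+2*π) → t₂ ∈ Set.Ico s (s+2*π) →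
      t₃ ∈ Set.Ico s (s+2*π) → t₄ ∈ Set.Ico s (s+2*π) →
      t₁ < t₂ → t₂ < t₃ → t₃ < t₄ →
      u t₁ = 0 → u t₂ = 0 → u t₃ = 0 → u t₄ = 0 →
      ∃ A : Finset ℝ, 4 ≤ A.card ∧ ∀ φ ∈ A, φ ∈ Set.Ico (0:ℝ) (2 * π) ∧ deriv r φ = 0 := by
    intro s t₁ t₂ t₃ t₄ hm1 hm2 hm3 hm4 h12 h23 h34 hz1 hz2 hz3 hz4
    set m : ℝ → ℝ := fun t => toIcoMod Real.two_pi_pos 0 t with hmdef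
    have hne : ∀ a b : ℝ, a ∈ Set.Ico s (s+2*π) → b ∈ Set.Ico s (s+2*π) → a < b → m a ≠ m b := by
      intro a b ha hb hab h
      exact absurd (FourEq3.mod_inj ha hb h) (ne_of_lt hab)
    refine ⟨{m t₁, m t₂, m t₃, m t₄}, ?_, ?_⟩
    · have c4 : ({m t₁, m t₂, m t₃, m t₄} : Finset ℝ).card = 4 := by
        rw [Finset.card_insert_of_notMem, Finset.card_insert_of_notMem,
          Finset.card_insert_of_notMem, Finset.card_singleton]
        · simp only [Finset.mem_singleton]
          exact hne t₃ t₄ hm3 hm4 h34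
        · simp only [Finset.mem_insert, Finset.mem_singleton]
          push_neg
          exact ⟨hne t₂ t₃ hm2 hm3 h23, hne t₂ t₄ hm2 hm4 (h23.trans h34)⟩
        · simp only [Finset.mem_insert, Finset.mem_singleton]
          push_neg
          exact ⟨hne t₁ t₂ hm1 hm2 h12, hne t₁ t₃ hm1 hm3 (h12.trans h23),
            hne t₁ t₄ hm1 hm4 ((h12.trans h23).trans h34)⟩
      rw [c4]
    · intro φ hφ
      simp only [Finset.mem_insert, Finset.mem_singleton] at hφ
      have hkey : ∀ t : ℝ, u t = 0 → φ = m t → φ ∈ Set.Ico (0:ℝ) (2*π) ∧ deriv r φ = 0 := by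
        intro t h hφt
        subst hφt
        refine ⟨FourEq3.mod_mem t, hz _ ?_⟩
        show u (toIcoMod Real.two_pi_pos 0 t) = 0
        rw [FourEq3.mod_eq huper 0 t]
        exact h
      rcases hφ with h | h | h | h
      exacts [hkey t₁ hz1 h, hkey t₂ hz2 h, hkey t₃ hz3 h, hkey t₄ hz4 h]
  have trivA : (∀ t : ℝ, deriv r t = 0) →
      ∃ A : Finset ℝ, 4 ≤ A.card ∧ ∀ φ ∈ A, φ ∈ Set.Ico (0:ℝ) (2 * π) ∧ deriv r φ = 0 := by
    intro hall
    refine ⟨{0, 1, 2, 3}, ?_, ?_⟩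
    · have hcard : ({(0:ℝ), 1, 2, 3} : Finset ℝ).card = 4 := by
        norm_num
      rw [hcard]
    · intro φ hφ
      have hπ : (3:ℝ) < 2*π := by linarith [Real.pi_gt_three]
      simp only [Finset.mem_insert, Finset.mem_singleton] at hφ
      rcases hφ with rfl | rfl | rfl | rfl <;>
        exact ⟨⟨by norm_num, by linarith⟩, hall _⟩
  by_cases hEx : ∃ x, 0 < u x
  · by_cases hEy : ∃ y, u y < 0
    · obtain ⟨x, hx0pos⟩ := hEx
      obtain ⟨y, hyneg⟩ := hEy
      -- the first zero to the right of x
      set y₁ := toIcoMod Real.two_pi_pos x y with hy₁def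
      have hy₁mem : y₁ ∈ Set.Ico x (x+2*π) := FourEq3.mod_mem' x y
      have hy₁neg : u y₁ < 0 := by
        rw [hy₁def, FourEq3.mod_eq huper x y]
        exact hyneg
      set S : Set ℝ := Set.Icc x (x+2*π) ∩ {t | u t = 0} with hSdef
      have hSclosed : IsClosed S := isClosed_Icc.inter (isClosed_eq hucont continuous_const)
      have hzS : ∃ z, z ∈ S ∧ z < x + 2*π := by
        have h0m : (0:ℝ) ∈ Set.uIcc (u x) (u y₁) :=
          Set.mem_uIcc.2 (Or.inr ⟨hy₁neg.le, hx0pos.le⟩)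
        obtain ⟨z, hzm, hz0⟩ := intermediate_value_uIcc (hucont.continuousOn) h0m
        rw [Set.uIcc_of_le hy₁mem.1] at hzm
        exact ⟨z, ⟨⟨hzm.1, hzm.2.trans hy₁mem.2.le⟩, hz0⟩, lt_of_le_of_lt hzm.2 hy₁mem.2⟩
      obtain ⟨z, hzS', hzlt⟩ := hzS
      have hSbdd : BddBelow S := BddBelow.mono Set.inter_subset_left bddBelow_Icc
      set q := sInf S with hqdef
      have hqS : q ∈ S := hSclosed.csInf_mem ⟨z, hzS'⟩ hSbdd
      have hq0 : u q = 0 := hqS.2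
      have hxq : x < q := by
        rcases eq_or_lt_of_le hqS.1.1 with h | h
        · exfalso
          rw [← h] at hq0
          exact absurd hq0 hx0pos.ne'
        · exact h
      have hqlt : q < x + 2*π := lt_of_le_of_lt (csInf_le hSbdd hzS') hzlt
      have hposR : ∀ t, x ≤ t → t < q → 0 < u t := by
        intro t h1 h2
        rcases lt_trichotomy (u t) 0 with hlt | heq | hgt
        · exfalso
          have h0m : (0:ℝ) ∈ Set.uIcc (u x) (u t) :=
            Set.mem_uIcc.2 (Or.inr ⟨hlt.le, hx0pos.le⟩)
          obtain ⟨z', hz'm, hz'0⟩ := intermediate_value_uIcc (hucont.continuousOn) h0m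
          rw [Set.uIcc_of_le h1] at hz'm
          have hz'S : z' ∈ S := ⟨⟨hz'm.1, by linarith [hz'm.2, hqS.1.2]⟩, hz'0⟩
          have := csInf_le hSbdd hz'S
          linarith [hz'm.2]
        · exfalso
          have htS : t ∈ S := ⟨⟨h1, by linarith [hqS.1.2]⟩, heq⟩
          linarith [csInf_le hSbdd htS]
        · exact hgt
      -- the first zero to the left of x
      set y₂ := toIcoMod Real.two_pi_pos (x-2*π) y with hy₂def
      have hy₂mem' : y₂ ∈ Set.Ico (x-2*π) ((x-2*π)+2*π) := FourEq3.mod_mem' (x-2*π) y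
      have hy₂mem : y₂ ∈ Set.Ico (x-2*π) x :=
        ⟨hy₂mem'.1, by linarith [hy₂mem'.2]⟩
      have hy₂neg : u y₂ < 0 := by
        rw [hy₂def, FourEq3.mod_eq huper (x-2*π) y]
        exact hyneg
      set S' : Set ℝ := Set.Icc (x-2*π) x ∩ {t | u t = 0} with hS'def
      have hS'closed : IsClosed S' := isClosed_Icc.inter (isClosed_eq hucont continuous_const)
      have hz₂S : ∃ z₂, z₂ ∈ S' := by
        have h0m : (0:ℝ) ∈ Set.uIcc (u y₂) (u x) :=
          Set.mem_uIcc.2 (Or.inl ⟨hy₂neg.le, hx0pos.le⟩)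
        obtain ⟨z₂, hzm, hz0⟩ := intermediate_value_uIcc (hucont.continuousOn) h0m
        rw [Set.uIcc_of_le hy₂mem.2.le] at hzm
        exact ⟨z₂, ⟨⟨le_trans hy₂mem.1 hzm.1, hzm.2⟩, hz0⟩⟩
      obtain ⟨z₂, hz₂S'⟩ := hz₂S
      have hS'bdd : BddAbove S' := BddAbove.mono Set.inter_subset_left bddAbove_Icc
      set p := sSup S' with hpdef
      have hpS : p ∈ S' := hS'closed.csSup_mem ⟨z₂, hz₂S'⟩ hS'bdd
      have hp0 : u p = 0 := hpS.2
      have hpx : p < x := by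
        rcases eq_or_lt_of_le hpS.1.2 with h | h
        · exfalso
          rw [h] at hp0
          exact absurd hp0 hx0pos.ne'
        · exact h
      have hposL : ∀ t, p < t → t ≤ x → 0 < u t := by
        intro t h1 h2
        rcases lt_trichotomy (u t) 0 with hlt | heq | hgt
        · exfalso
          have h0m : (0:ℝ) ∈ Set.uIcc (u t) (u x) :=
            Set.mem_uIcc.2 (Or.inl ⟨hlt.le, hx0pos.le⟩)
          obtain ⟨z₃, hz₃m, hz₃0⟩ := intermediate_value_uIcc (hucont.continuousOn) h0m
          rw [Set.uIcc_of_le h2] at hz₃m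
          have hz₃S : z₃ ∈ S' := ⟨⟨by linarith [hz₃m.1, hpS.1.1], hz₃m.2⟩, hz₃0⟩
          have := le_csSup hS'bdd hz₃S
          linarith [hz₃m.1]
        · exfalso
          have htS : t ∈ S' := ⟨⟨by linarith [hpS.1.1], h2⟩, heq⟩
          linarith [le_csSup hS'bdd htS]
        · exact hgt
      have hpq : p < q := hpx.trans hxq
      have hposM : ∀ t ∈ Set.Ioo p q, 0 < u t := by
        intro t ht
        rcases le_total t x with h | h
        · exact hposL t ht.1 h
        · exact hposR t h ht.2
      have hq2 : q < p + 2*π := by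
        by_contra hcon
        push_neg at hcon
        set y₃ := toIcoMod Real.two_pi_pos p y with hy₃def
        have hy₃mem : y₃ ∈ Set.Ico p (p+2*π) := FourEq3.mod_mem' p y
        have hy₃neg : u y₃ < 0 := by
          rw [hy₃def, FourEq3.mod_eq huper p y]
          exact hyneg
        rcases eq_or_lt_of_le hy₃mem.1 with h | h
        · rw [← h, hp0] at hy₃neg
          exact lt_irrefl 0 hy₃neg
        · have := hposM y₃ ⟨h, lt_of_lt_of_le hy₃mem.2 hcon⟩
          linarith
      have hp2 : u (p+2*π) = 0 := by
        rw [huper p]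
        exact hp0
      have hnnPQ : ∀ t ∈ Set.Icc p q, 0 ≤ u t := FourEq.icc_nonneg_of_ioo hp0 hq0 hposM
      have hxIoo : x ∈ Set.Ioo p q := ⟨hpx, hxq⟩
      have combine_nonneg : ∀ {a b c : ℝ}, (∀ t ∈ Set.Icc a b, 0 ≤ u t) →
          (∀ t ∈ Set.Icc b c, 0 ≤ u t) → ∀ t ∈ Set.Icc a c, 0 ≤ u t := by
        intro a b c h1 h2 t ht
        rcases le_total t b with h | h
        · exact h1 t ⟨ht.1, h⟩
        · exact h2 t ⟨h, ht.2⟩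
      have combine_nonpos : ∀ {a b c : ℝ}, (∀ t ∈ Set.Icc a b, u t ≤ 0) →
          (∀ t ∈ Set.Icc b c, u t ≤ 0) → ∀ t ∈ Set.Icc a c, u t ≤ 0 := by
        intro a b c h1 h2 t ht
        rcases le_total t b with h | h
        · exact h1 t ⟨ht.1, h⟩
        · exact h2 t ⟨h, ht.2⟩
      by_cases hw2 : ∃ w₁ w₂ : ℝ, w₁ ∈ Set.Ioo q (p+2*π) ∧ w₂ ∈ Set.Ioo q (p+2*π) ∧
          w₁ < w₂ ∧ u w₁ = 0 ∧ u w₂ = 0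
      · obtain ⟨w₁, w₂, hw₁, hw₂, h12, hz1, hz2⟩ := hw2
        exact build p p q w₁ w₂
          ⟨le_refl p, by linarith [Real.two_pi_pos]⟩
          ⟨hpq.le, hq2⟩
          ⟨(hpq.trans hw₁.1).le, hw₁.2⟩
          ⟨(hpq.trans hw₂.1).le, hw₂.2⟩
          hpq hw₁.1 h12 hp0 hq0 hz1 hz2
      · push_neg at hw2
        exfalso
        by_cases hw : ∃ w ∈ Set.Ioo q (p+2*π), u w = 0
        · obtain ⟨w, hwmem, hwz⟩ := hw
          have hnz1 : ∀ t ∈ Set.Ioo q w, u t ≠ 0 := by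
            intro t ht htz
            exact hw2 t w ⟨ht.1, ht.2.trans hwmem.2⟩ hwmem ht.2 htz hwz
          have hnz2 : ∀ t ∈ Set.Ioo w (p+2*π), u t ≠ 0 := by
            intro t ht htz
            exact hw2 w t hwmem ⟨hwmem.1.trans ht.1, ht.2⟩ ht.1 hwz htz
          have hshift : ∀ t : ℝ, u t = u (t - 2*π) := by
            intro t
            have h := huper (t - 2*π)
            have e : t - 2*π + 2*π = t := by ring
            rw [e] at h
            exact h
          rcases FourEq.sign_const hucont hnz1 with h1p | h1n <;>
            rcases FourEq.sign_const hucont hnz2 with h2p | h2n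
          · exact FourEq2.all_nonneg_contra hucont huper h0
              ⟨hpx, by linarith [hxq, hq2]⟩ hx0pos
              (combine_nonneg hnnPQ
                (combine_nonneg (FourEq.icc_nonneg_of_ioo hq0 hwz h1p)
                  (FourEq.icc_nonneg_of_ioo hwz hp2 h2p)))
          · exact FourEq2.key hucont huper h0 hC hS (hpq.trans hwmem.1) hwmem.2
              ⟨hpx, hxq.trans hwmem.1⟩ hx0pos
              (combine_nonneg hnnPQ (FourEq.icc_nonneg_of_ioo hq0 hwz h1p))
              (FourEq.icc_nonpos_of_ioo hwz hp2 h2n)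
          · have huX : 0 < u (x+2*π) := by
              rw [huper x]
              exact hx0pos
            refine FourEq2.key hucont huper h0 hC hS (p := w) (q := q+2*π) (x := x+2*π)
              (by linarith [hwmem.2, hpq]) (by linarith [hwmem.1])
              ⟨by linarith [hwmem.2, hxIoo.1], by linarith [hxIoo.2]⟩ huX ?_ ?_
            · intro t ht
              rcases le_total t (p+2*π) with h | h
              · exact FourEq.icc_nonneg_of_ioo hwz hp2 h2p t ⟨ht.1, h⟩
              · rw [hshift t]
                exact hnnPQ _ ⟨by linarith, by linarith [ht.2]⟩
            · intro t ht
              rw [hshift t]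
              exact FourEq.icc_nonpos_of_ioo hq0 hwz h1n _
                ⟨by linarith [ht.1], by linarith [ht.2]⟩
          · exact FourEq2.key hucont huper h0 hC hS hpq hq2 hxIoo hx0pos hnnPQ
              (combine_nonpos (FourEq.icc_nonpos_of_ioo hq0 hwz h1n)
                (FourEq.icc_nonpos_of_ioo hwz hp2 h2n))
        · push_neg at hw
          rcases FourEq.sign_const hucont hw with hp' | hn'
          · exact FourEq2.all_nonneg_contra hucont huper h0
              ⟨hpx, by linarith [hxq, hq2]⟩ hx0pos
              (combine_nonneg hnnPQ (FourEq.icc_nonneg_of_ioo hq0 hp2 hp'))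
          · exact FourEq2.key hucont huper h0 hC hS hpq hq2 hxIoo hx0pos hnnPQ
              (FourEq.icc_nonpos_of_ioo hq0 hp2 hn')
    · -- no negative value : u ≥ 0 everywhere, so u ≡ 0
      push_neg at hEy
      obtain ⟨x, hx0pos⟩ := hEx
      exact absurd (FourEq2.all_nonneg_contra hucont huper h0
        (p := x - π) ⟨by linarith [Real.pi_pos], by linarith [Real.pi_pos]⟩ hx0pos
        (fun t _ => hEy t)) not_false
  · -- no positive value : u ≤ 0 everywhere, so u ≡ 0
    push_neg at hEx
    apply trivA
    intro t
    apply hz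
    by_contra hne
    have hlt : u t < 0 := lt_of_le_of_ne (hEx t) hne
    have hcontra := FourEq.integral_neg_of_nonpos hucont (a := t - π) (b := (t - π) + 2*π)
      (x := t) ⟨by linarith [Real.pi_pos], by linarith [Real.pi_pos]⟩
      (fun s _ => hEx s) hlt
    rw [FourEq.per_shift huper, h0] at hcontra
    exact lt_irrefl 0 hcontra
end

section
/- Let p : ℝ → ℝ be 2π-periodic and C³ such that p' has only finitely many zeros, all simple. Then the number n of zeros of p' in [0, 2π) satisfies n = (1/π)∫₀^{2π} (p''(φ)² - p'(φ)p'''(φ))/(p'(φ)² + p''(φ)²) dφ. -/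
open Real Filter Set Topology

section aux

variable {f f' f'' : ℝ → ℝ}

lemma aux_denom_pos (hne : ∀ x, f x = 0 → f' x ≠ 0) (x : ℝ) :
    0 < f x ^ 2 + f' x ^ 2 := by
  rcases eq_or_ne (f x) 0 with h | h
  · have h2 := hne x h
    positivity
  · positivity

lemma aux_hasDeriv (hd1 : ∀ x, HasDerivAt f (f' x) x) (hd2 : ∀ x, HasDerivAt f' (f'' x) x)
    (hne : ∀ x, f x = 0 → f' x ≠ 0) {x : ℝ} (hx : f x ≠ 0) :
    HasDerivAt (fun y => -arctan (f' y / f y))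
      ((f' x ^ 2 - f x * f'' x) / (f x ^ 2 + f' x ^ 2)) x := by
  have hu : HasDerivAt (fun y => f' y / f y)
      ((f'' x * f x - f' x * f' x) / f x ^ 2) x := (hd2 x).div (hd1 x) hx
  have ha := ((Real.hasDerivAt_arctan (f' x / f x)).comp x hu).neg
  refine ha.congr_deriv ?_
  have hd : f x ^ 2 + f' x ^ 2 ≠ 0 := (aux_denom_pos hne x).ne'
  field_simp
  ring

lemma aux_tendsto_right (hd1 : ∀ x, HasDerivAt f (f' x) x) (hc : Continuous f')
    {a : ℝ} (ha : f a = 0) (ha' : f' a ≠ 0) :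
    Tendsto (fun x => arctan (f' x / f x)) (𝓝[>] a) (𝓝 (π / 2)) := by
  have hslope : Tendsto (slope f a) (𝓝[>] a) (𝓝 (f' a)) :=
    (hasDerivAt_iff_tendsto_slope.1 (hd1 a)).mono_left
      (nhdsWithin_mono _ fun x hx => ne_of_gt hx)
  have hsub : Tendsto (fun x => x - a) (𝓝[>] a) (𝓝[>] 0) := by
    apply tendsto_nhdsWithin_of_tendsto_nhds_of_eventually_within
    · have h0 : Tendsto (fun x : ℝ => x - a) (𝓝 a) (𝓝 0) := by
        simpa using (tendsto_id (x := 𝓝 a)).sub_const a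
      exact h0.mono_left nhdsWithin_le_nhds
    · filter_upwards [self_mem_nhdsWithin] with x hx
      exact sub_pos.2 (mem_Ioi.mp hx)
  have hinv : Tendsto (fun x => (x - a)⁻¹) (𝓝[>] a) atTop :=
    tendsto_inv_nhdsGT_zero.comp hsub
  have hratio : Tendsto (fun x => f' x / slope f a x) (𝓝[>] a) (𝓝 1) := by
    have h2 := (hc.continuousAt.tendsto.mono_left
      (nhdsWithin_le_nhds (s := Ioi a))).div hslope ha'
    rw [div_self ha'] at h2; exact h2
  have hdiv : Tendsto (fun x => f' x / f x) (𝓝[>] a) atTop := by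
    refine (Filter.Tendsto.pos_mul_atTop one_pos hratio hinv).congr' ?_
    filter_upwards [self_mem_nhdsWithin] with x hx
    have hxa : x - a ≠ 0 := sub_ne_zero.2 (ne_of_gt hx)
    rw [slope_def_field, ha, sub_zero, div_div_eq_mul_div, div_mul_eq_mul_div,
      mul_assoc, mul_inv_cancel₀ hxa, mul_one]
  exact (Real.tendsto_arctan_atTop.mono_right nhdsWithin_le_nhds).comp hdiv

lemma aux_tendsto_left (hd1 : ∀ x, HasDerivAt f (f' x) x) (hc : Continuous f')
    {a : ℝ} (ha : f a = 0) (ha' : f' a ≠ 0) :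
    Tendsto (fun x => arctan (f' x / f x)) (𝓝[<] a) (𝓝 (-(π / 2))) := by
  have hslope : Tendsto (slope f a) (𝓝[<] a) (𝓝 (f' a)) :=
    (hasDerivAt_iff_tendsto_slope.1 (hd1 a)).mono_left
      (nhdsWithin_mono _ fun x hx => ne_of_lt hx)
  have hsub : Tendsto (fun x => x - a) (𝓝[<] a) (𝓝[<] 0) := by
    apply tendsto_nhdsWithin_of_tendsto_nhds_of_eventually_within
    · have h0 : Tendsto (fun x : ℝ => x - a) (𝓝 a) (𝓝 0) := by
        simpa using (tendsto_id (x := 𝓝 a)).sub_const a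
      exact h0.mono_left nhdsWithin_le_nhds
    · filter_upwards [self_mem_nhdsWithin] with x hx
      exact sub_neg.2 (mem_Iio.mp hx)
  have hinv : Tendsto (fun x => (x - a)⁻¹) (𝓝[<] a) atBot := by
    have h1 : Tendsto (fun x : ℝ => -(-x)⁻¹) (𝓝[<] (0:ℝ)) atBot := by
      refine tendsto_neg_atTop_atBot.comp (tendsto_inv_nhdsGT_zero.comp ?_)
      apply tendsto_nhdsWithin_of_tendsto_nhds_of_eventually_within
      · simpa using (tendsto_id (x := 𝓝 (0:ℝ))).neg.mono_left (nhdsWithin_le_nhds (s := Iio (0:ℝ)))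
      · filter_upwards [self_mem_nhdsWithin] with x hx
        simpa using hx
    have := h1.comp hsub
    refine this.congr fun x => ?_
    simp
  have hratio : Tendsto (fun x => f' x / slope f a x) (𝓝[<] a) (𝓝 1) := by
    have h2 := (hc.continuousAt.tendsto.mono_left
      (nhdsWithin_le_nhds (s := Iio a))).div hslope ha'
    rw [div_self ha'] at h2; exact h2
  have hdiv : Tendsto (fun x => f' x / f x) (𝓝[<] a) atBot := by
    refine (Filter.Tendsto.pos_mul_atBot one_pos hratio hinv).congr' ?_
    filter_upwards [self_mem_nhdsWithin] with x hx
    have hxa : x - a ≠ 0 := sub_ne_zero.2 (ne_of_lt hx)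
    rw [slope_def_field, ha, sub_zero, div_div_eq_mul_div, div_mul_eq_mul_div,
      mul_assoc, mul_inv_cancel₀ hxa, mul_one]
  exact (Real.tendsto_arctan_atBot.mono_right nhdsWithin_le_nhds).comp hdiv

lemma aux_integral (hd1 : ∀ x, HasDerivAt f (f' x) x) (hd2 : ∀ x, HasDerivAt f' (f'' x) x)
    (hne : ∀ x, f x = 0 → f' x ≠ 0) (hc : Continuous f')
    (hcont : Continuous fun x => (f' x ^ 2 - f x * f'' x) / (f x ^ 2 + f' x ^ 2))
    {a b : ℝ} (hab : a < b) (ha : f a = 0) (hb : f b = 0)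
    (h0 : ∀ x ∈ Ioo a b, f x ≠ 0) :
    ∫ x in a..b, (f' x ^ 2 - f x * f'' x) / (f x ^ 2 + f' x ^ 2) = π := by
  have key := intervalIntegral.integral_eq_sub_of_hasDerivAt_of_tendsto hab
    (f := fun y => -arctan (f' y / f y))
    (fun x hx => aux_hasDeriv hd1 hd2 hne (h0 x hx))
    (hcont.intervalIntegrable a b)
    ((aux_tendsto_right hd1 hc ha (hne a ha)).neg)
    ((aux_tendsto_left hd1 hc hb (hne b hb)).neg)
  rw [key]; ring

end aux

theorem zero_counting_integral
    (p : ℝ → ℝ) (hper : Function.Periodic p (2 * π)) (hp : ContDiff ℝ 3 p)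
    (hfin : {φ ∈ Set.Ico (0:ℝ) (2 * π) | deriv p φ = 0}.Finite)
    (hsimple : ∀ φ, deriv p φ = 0 → deriv (deriv p) φ ≠ 0) :
    ({φ ∈ Set.Ico (0:ℝ) (2 * π) | deriv p φ = 0}.ncard : ℝ)
      = (1 / π) * ∫ φ in (0:ℝ)..(2 * π),
          ((deriv (deriv p) φ) ^ 2 - deriv p φ * deriv (deriv (deriv p)) φ)
            / ((deriv p φ) ^ 2 + (deriv (deriv p) φ) ^ 2) := by
  set f := deriv p with hf
  set f' := deriv f with hf'
  set f'' := deriv f' with hf''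
  -- regularity
  have hp2 : ContDiff ℝ 2 f := by
    have h3 : ContDiff ℝ (2 + 1) p := by
      convert hp using 2; norm_num
    exact ((contDiff_succ_iff_deriv (n := 2)).1 h3).2.2
  have hp1 : ContDiff ℝ 1 f' := by
    have h3 : ContDiff ℝ (1 + 1) f := by
      convert hp2 using 2; norm_num
    exact ((contDiff_succ_iff_deriv (n := 1)).1 h3).2.2
  have hcf' : Continuous f' := hp1.continuous
  have hcf : Continuous f := hp2.continuous
  have hcf'' : Continuous f'' := (contDiff_one_iff_deriv.1 hp1).2
  have hd1 : ∀ x, HasDerivAt f (f' x) x := fun x =>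
    ((hp2.differentiable (by norm_num)) x).hasDerivAt
  have hd2 : ∀ x, HasDerivAt f' (f'' x) x := fun x =>
    ((hp1.differentiable (by norm_num)) x).hasDerivAt
  have hne : ∀ x, f x = 0 → f' x ≠ 0 := hsimple
  -- periodicity of f
  have hperf : Function.Periodic f (2 * π) := by
    intro x
    have h1 : (fun y => p (y + 2 * π)) = p := funext hper
    calc f (x + 2 * π) = deriv (fun y => p (y + 2 * π)) x :=
          (deriv_comp_add_const p (2 * π) x).symm
      _ = f x := by rw [h1]
  have hperf' : Function.Periodic f' (2 * π) := by
    intro x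
    have h1 : (fun y => f (y + 2 * π)) = f := funext hperf
    calc f' (x + 2 * π) = deriv (fun y => f (y + 2 * π)) x :=
          (deriv_comp_add_const f (2 * π) x).symm
      _ = f' x := by rw [h1]
  have hperf'' : Function.Periodic f'' (2 * π) := by
    intro x
    have h1 : (fun y => f' (y + 2 * π)) = f' := funext hperf'
    calc f'' (x + 2 * π) = deriv (fun y => f' (y + 2 * π)) x :=
          (deriv_comp_add_const f' (2 * π) x).symm
      _ = f'' x := by rw [h1]
  have hpi : (0:ℝ) < 2 * π := by positivity
  -- integrand
  set G : ℝ → ℝ := fun x => (f' x ^ 2 - f x * f'' x) / (f x ^ 2 + f' x ^ 2) with hG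
  have hdenom : ∀ x, (0:ℝ) < f x ^ 2 + f' x ^ 2 := aux_denom_pos hne
  have hcontG : Continuous G := by
    apply Continuous.div
    · exact (hcf'.pow 2).sub (hcf.mul hcf'')
    · exact (hcf.pow 2).add (hcf'.pow 2)
    · exact fun x => (hdenom x).ne'
  have hperG : Function.Periodic G (2 * π) := fun x => by
    simp only [hG, hperf x, hperf' x, hperf'' x]
  -- zeros everywhere come from zeros in [0, 2π)
  set Z := {φ ∈ Set.Ico (0:ℝ) (2 * π) | f φ = 0} with hZ
  -- case analysis on whether Z is empty
  rcases eq_or_ne Z ∅ with hZe | hZne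
  · -- no zeros at all
    have hnz : ∀ x, f x ≠ 0 := by
      intro x hx
      obtain ⟨y, hy, hxy⟩ := hperf.exists_mem_Ico₀ hpi x
      have : y ∈ Z := ⟨hy, by rw [← hxy, hx]⟩
      rw [hZe] at this; exact this
    have hFTC := intervalIntegral.integral_eq_sub_of_hasDerivAt
      (f := fun y => -arctan (f' y / f y)) (f' := G) (a := (0:ℝ)) (b := 2 * π)
      (fun x _ => aux_hasDeriv hd1 hd2 hne (hnz x))
      (hcontG.intervalIntegrable 0 (2 * π))
    have h2 : ∫ x in (0:ℝ)..(2 * π), G x = 0 := by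
      rw [hFTC]
      have e1 : f (2 * π) = f 0 := by simpa using hperf 0
      have e2 : f' (2 * π) = f' 0 := by simpa using hperf' 0
      simp [e1, e2]
    rw [hZe]
    simpa [hG] using h2
  · -- at least one zero
    classical
    set s : Finset ℝ := hfin.toFinset with hs
    have hmem : ∀ x, x ∈ s ↔ x ∈ Z := fun x => hfin.mem_toFinset
    set n : ℕ := s.card with hn
    have hnpos : 0 < n := by
      rcases nonempty_iff_ne_empty.2 hZne with ⟨x, hx⟩
      exact Finset.card_pos.2 ⟨x, (hmem x).2 hx⟩
    set e : Fin n ↪o ℝ := s.orderEmbOfFin rfl with he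
    have hemem : ∀ i, e i ∈ Z := fun i => (hmem _).1 (s.orderEmbOfFin_mem rfl i)
    have hesurj : ∀ x ∈ Z, ∃ i, e i = x := by
      intro x hx
      have : x ∈ Set.range e := by
        rw [Finset.range_orderEmbOfFin]
        exact (hmem x).2 hx
      exact this
    set z : ℕ → ℝ := fun i => if h : i < n then e ⟨i, h⟩ else e ⟨0, hnpos⟩ + 2 * π with hz
    have hz0 : z 0 = e ⟨0, hnpos⟩ := by simp [hz, hnpos]
    have hzn : z n = e ⟨0, hnpos⟩ + 2 * π := by simp [hz]
    have hzval : ∀ i (h : i < n), z i = e ⟨i, h⟩ := fun i h => by simp [hz, h]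
    have hfz : ∀ i ≤ n, f (z i) = 0 := by
      intro i hi
      rcases lt_or_eq_of_le hi with h | h
      · rw [hzval i h]; exact (hemem _).2
      · subst h
        rw [hzn, hperf]
        exact (hemem _).2
    have hzmono : ∀ i < n, z i < z (i + 1) := by
      intro i hi
      rcases lt_or_eq_of_le (Nat.succ_le_of_lt hi) with h | h
      · rw [hzval i hi, hzval (i+1) h]
        exact e.strictMono (by simp [Fin.lt_def])
      · have : i + 1 = n := h
        rw [hzval i hi, this, hzn]
        have h1 : e ⟨i, hi⟩ < 2 * π := (hemem ⟨i, hi⟩).1.2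
        have h2 : (0:ℝ) ≤ e ⟨0, hnpos⟩ := (hemem ⟨0, hnpos⟩).1.1
        linarith
    -- no zeros strictly between consecutive z's
    have hgap : ∀ i < n, ∀ x ∈ Ioo (z i) (z (i + 1)), f x ≠ 0 := by
      intro i hi x hx hfx
      rcases lt_or_eq_of_le (Nat.succ_le_of_lt hi) with h | h
      · -- interior gap
        rw [hzval i hi] at hx
        rw [hzval (i+1) h] at hx
        have hx0 : (0:ℝ) ≤ x := le_trans (hemem ⟨i, hi⟩).1.1 hx.1.le
        have hx2 : x < 2 * π := lt_trans hx.2 (hemem ⟨i+1, h⟩).1.2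
        obtain ⟨j, hj⟩ := hesurj x ⟨⟨hx0, hx2⟩, hfx⟩
        have hji : (⟨i, hi⟩ : Fin n) < j := e.strictMono.lt_iff_lt.1 (by rw [hj]; exact hx.1)
        have hji' : j < (⟨i+1, h⟩ : Fin n) := e.strictMono.lt_iff_lt.1 (by rw [hj]; exact hx.2)
        have h1 : i < (j : ℕ) := by simpa [Fin.lt_def] using hji
        have h2 : (j : ℕ) < i + 1 := by simpa [Fin.lt_def] using hji'
        omega
      · -- last gap
        have hil : i + 1 = n := h
        rw [hzval i hi] at hx
        rw [hil, hzn] at hx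
        rcases lt_or_ge x (2 * π) with hlt | hge
        · have hx0 : (0:ℝ) ≤ x := le_trans (hemem ⟨i, hi⟩).1.1 hx.1.le
          obtain ⟨j, hj⟩ := hesurj x ⟨⟨hx0, hlt⟩, hfx⟩
          have hji : (⟨i, hi⟩ : Fin n) < j := e.strictMono.lt_iff_lt.1 (by rw [hj]; exact hx.1)
          have h1 : i < (j : ℕ) := by simpa [Fin.lt_def] using hji
          have h2 : (j : ℕ) < n := j.2
          omega
        · set y := x - 2 * π with hy
          have hfy : f y = 0 := by
            have := hperf y
            rw [hy] at this ⊢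
            rw [← this]; simpa using hfx
          have hy0 : (0:ℝ) ≤ y := by simp [hy]; linarith
          have hy2 : y < 2 * π := by
            have hx4 : x < e ⟨0, hnpos⟩ + 2 * π := hx.2
            have := (hemem ⟨0, hnpos⟩).1.2
            simp [hy]; linarith
          obtain ⟨j, hj⟩ := hesurj y ⟨⟨hy0, hy2⟩, hfy⟩
          have hylt : y < e ⟨0, hnpos⟩ := by
            have hx4 : x < e ⟨0, hnpos⟩ + 2 * π := hx.2
            simp [hy]; linarith
          have : e ⟨0, hnpos⟩ ≤ e j := e.monotone (by simp [Fin.le_def])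
          rw [hj] at this
          linarith
    -- each gap integral equals π
    have hgapint : ∀ i < n, ∫ x in (z i)..(z (i+1)), G x = π := by
      intro i hi
      exact aux_integral hd1 hd2 hne hcf' hcontG (hzmono i hi)
        (hfz i hi.le) (hfz (i+1) (Nat.succ_le_of_lt hi)) (hgap i hi)
    have hsum : ∫ x in (z 0)..(z n), G x = n * π := by
      rw [← intervalIntegral.sum_integral_adjacent_intervals
        (fun k _ => hcontG.intervalIntegrable (z k) (z (k+1)))]
      rw [Finset.sum_congr rfl fun i hi => hgapint i (Finset.mem_range.1 hi)]
      simp [mul_comm]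
    -- shift the integration interval
    have hshift : ∫ x in (0:ℝ)..(2 * π), G x = ∫ x in (z 0)..(z 0 + 2 * π), G x := by
      have := hperG.intervalIntegral_add_eq 0 (z 0)
      simpa using this
    have hint : ∫ x in (0:ℝ)..(2 * π), G x = n * π := by
      rw [hshift, hz0, ← hzn, ← hz0, hsum]
    have hncard : (Z.ncard : ℝ) = (n : ℝ) := by
      rw [hZ, Set.ncard_eq_toFinset_card _ hfin]
    rw [show ({φ ∈ Set.Ico (0:ℝ) (2 * π) | deriv p φ = 0}.ncard : ℝ) = (Z.ncard : ℝ) from rfl,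
      hncard]
    have : ∫ φ in (0:ℝ)..(2 * π),
        ((deriv (deriv p) φ) ^ 2 - deriv p φ * deriv (deriv (deriv p)) φ)
          / ((deriv p φ) ^ 2 + (deriv (deriv p) φ) ^ 2) = ∫ x in (0:ℝ)..(2 * π), G x := rfl
    rw [this, hint]
    field_simp
end

section
/- Let p : ℝ → ℝ be 2π-periodic and C³ such that p'(φ)² + p''(φ)² > 0 for all φ. Then the winding number m of the evolute e(φ) = p'(φ)u'(φ) - p''(φ)u(φ) around the origin satisfies m = 1 - n/2, where n is the number of zeros of p' in [0,2π). In particular m ≤ 0 and n = 2 - 2m. -/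
open Real Set

noncomputable def zAux (p : ℝ → ℝ) : ℝ → ℂ := fun t =>
  Complex.ofReal (deriv p t) + Complex.ofReal (deriv (deriv p) t) * Complex.I

noncomputable def psiAux (p : ℝ → ℝ) : ℝ → ℝ := fun t =>
  (deriv p t * deriv (deriv (deriv p)) t - (deriv (deriv p) t) ^ 2) /
    ((deriv p t) ^ 2 + (deriv (deriv p) t) ^ 2)

noncomputable def rhoAux (p : ℝ → ℝ) : ℝ → ℝ := fun t =>
  (deriv p t * deriv (deriv p) t + deriv (deriv p) t * deriv (deriv (deriv p)) t) /
    ((deriv p t) ^ 2 + (deriv (deriv p) t) ^ 2)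

noncomputable def thetaAux (p : ℝ → ℝ) : ℝ → ℝ := fun t =>
  (zAux p 0).arg + ∫ s in (0:ℝ)..t, psiAux p s

noncomputable def rhoIntAux (p : ℝ → ℝ) : ℝ → ℝ := fun t =>
  ∫ s in (0:ℝ)..t, rhoAux p s

section
variable {p : ℝ → ℝ}

lemma smooth2 (hp : ContDiff ℝ 3 p) : ContDiff ℝ 2 (deriv p) := by
  have h := (contDiff_succ_iff_deriv (n := 2)).mp (by norm_num at hp ⊢; exact hp)
  exact h.2.2

lemma smooth1 (hp : ContDiff ℝ 3 p) : ContDiff ℝ 1 (deriv (deriv p)) := by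
  have h := (contDiff_succ_iff_deriv (n := 1)).mp (by
    have := smooth2 hp; norm_num at this ⊢; exact this)
  exact h.2.2

lemma diff_p (hp : ContDiff ℝ 3 p) : Differentiable ℝ p :=
  hp.differentiable (by norm_num)

lemma diff_f (hp : ContDiff ℝ 3 p) : Differentiable ℝ (deriv p) :=
  (smooth2 hp).differentiable (by norm_num)

lemma diff_f' (hp : ContDiff ℝ 3 p) : Differentiable ℝ (deriv (deriv p)) :=
  (smooth1 hp).differentiable (by norm_num)

lemma cont_f (hp : ContDiff ℝ 3 p) : Continuous (deriv p) := (diff_f hp).continuous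

lemma cont_f' (hp : ContDiff ℝ 3 p) : Continuous (deriv (deriv p)) := (diff_f' hp).continuous

lemma cont_f'' (hp : ContDiff ℝ 3 p) : Continuous (deriv (deriv (deriv p))) := by
  have h := (contDiff_one_iff_deriv).mp (smooth1 hp)
  exact h.2

lemma per_deriv {c : ℝ} {g : ℝ → ℝ} (hg : Function.Periodic g c) :
    Function.Periodic (deriv g) c := by
  intro x
  rw [← deriv_comp_add_const]
  congr 1
  funext y
  exact hg y
end

section
variable {p : ℝ → ℝ}

lemma denom_pos (hreg : ∀ φ, 0 < (deriv p φ) ^ 2 + (deriv (deriv p) φ) ^ 2) (t : ℝ) :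
    (0:ℝ) < (deriv p t) ^ 2 + (deriv (deriv p) t) ^ 2 := hreg t

lemma cont_psi (hp : ContDiff ℝ 3 p)
    (hreg : ∀ φ, 0 < (deriv p φ) ^ 2 + (deriv (deriv p) φ) ^ 2) :
    Continuous (psiAux p) := by
  apply Continuous.div
  · exact ((cont_f hp).mul (cont_f'' hp)).sub ((cont_f' hp).pow 2)
  · exact ((cont_f hp).pow 2).add ((cont_f' hp).pow 2)
  · exact fun t => ne_of_gt (hreg t)

lemma cont_rho (hp : ContDiff ℝ 3 p)
    (hreg : ∀ φ, 0 < (deriv p φ) ^ 2 + (deriv (deriv p) φ) ^ 2) :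
    Continuous (rhoAux p) := by
  apply Continuous.div
  · exact ((cont_f hp).mul (cont_f' hp)).add ((cont_f' hp).mul (cont_f'' hp))
  · exact ((cont_f hp).pow 2).add ((cont_f' hp).pow 2)
  · exact fun t => ne_of_gt (hreg t)

lemma theta_hasDeriv (hp : ContDiff ℝ 3 p)
    (hreg : ∀ φ, 0 < (deriv p φ) ^ 2 + (deriv (deriv p) φ) ^ 2) (t : ℝ) :
    HasDerivAt (thetaAux p) (psiAux p t) t := by
  have := ((cont_psi hp hreg).integral_hasStrictDerivAt 0 t).hasDerivAt
  exact this.const_add _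

lemma rhoInt_hasDeriv (hp : ContDiff ℝ 3 p)
    (hreg : ∀ φ, 0 < (deriv p φ) ^ 2 + (deriv (deriv p) φ) ^ 2) (t : ℝ) :
    HasDerivAt (rhoIntAux p) (rhoAux p t) t :=
  ((cont_rho hp hreg).integral_hasStrictDerivAt 0 t).hasDerivAt

lemma z_ne_zero (hreg : ∀ φ, 0 < (deriv p φ) ^ 2 + (deriv (deriv p) φ) ^ 2) (t : ℝ) :
    zAux p t ≠ 0 := by
  intro h
  have h1 : deriv p t = 0 ∧ deriv (deriv p) t = 0 := by
    have := congrArg Complex.re h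
    have := congrArg Complex.im h
    simp [zAux] at *
    constructor <;> assumption
  have := hreg t
  rw [h1.1, h1.2] at this
  norm_num at this

lemma z_hasDeriv (hp : ContDiff ℝ 3 p) (t : ℝ) :
    HasDerivAt (zAux p)
      (Complex.ofReal (deriv (deriv p) t) + Complex.ofReal (deriv (deriv (deriv p)) t) * Complex.I) t := by
  have h1 : HasDerivAt (fun s => Complex.ofReal (deriv p s)) (Complex.ofReal (deriv (deriv p) t)) t :=
    ((diff_f hp t).hasDerivAt).ofReal_comp
  have h2 : HasDerivAt (fun s => Complex.ofReal (deriv (deriv p) s) * Complex.I)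
      (Complex.ofReal (deriv (deriv (deriv p)) t) * Complex.I) t :=
    (((diff_f' hp t).hasDerivAt).ofReal_comp).mul_const _
  exact h1.add h2
end

section
variable {p : ℝ → ℝ}

lemma z_mul_L (hreg : ∀ φ, 0 < (deriv p φ) ^ 2 + (deriv (deriv p) φ) ^ 2) (t : ℝ) :
    zAux p t * (Complex.ofReal (rhoAux p t) + Complex.ofReal (psiAux p t) * Complex.I)
      = Complex.ofReal (deriv (deriv p) t) + Complex.ofReal (deriv (deriv (deriv p)) t) * Complex.I := by
  have hD : (deriv p t) ^ 2 + (deriv (deriv p) t) ^ 2 ≠ 0 := ne_of_gt (hreg t)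
  rw [Complex.ext_iff]
  constructor <;>
  · simp only [zAux, rhoAux, psiAux, Complex.add_re, Complex.add_im, Complex.mul_re,
      Complex.mul_im, Complex.ofReal_re, Complex.ofReal_im, Complex.I_re, Complex.I_im,
      mul_zero, zero_mul, mul_one, sub_zero, zero_add, add_zero, zero_sub, neg_zero, neg_neg]
    field_simp
    ring

lemma polar (hp : ContDiff ℝ 3 p)
    (hreg : ∀ φ, 0 < (deriv p φ) ^ 2 + (deriv (deriv p) φ) ^ 2) (t : ℝ) :
    zAux p t = Complex.ofReal (‖zAux p 0‖ * Real.exp (rhoIntAux p t))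
      * Complex.exp (Complex.ofReal (thetaAux p t) * Complex.I) := by
  set L : ℝ → ℂ := fun s => Complex.ofReal (rhoIntAux p s) + Complex.ofReal (thetaAux p s) * Complex.I with hL
  set F : ℝ → ℂ := fun s => zAux p s * Complex.exp (-(L s)) with hF
  have hLd : ∀ s, HasDerivAt L (Complex.ofReal (rhoAux p s) + Complex.ofReal (psiAux p s) * Complex.I) s := by
    intro s
    exact ((rhoInt_hasDeriv hp hreg s).ofReal_comp).add
      (((theta_hasDeriv hp hreg s).ofReal_comp).mul_const _)
  have hFd : ∀ s, HasDerivAt F 0 s := by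
    intro s
    have hE : HasDerivAt (fun u => Complex.exp (-(L u)))
        (Complex.exp (-(L s)) * (-(Complex.ofReal (rhoAux p s) + Complex.ofReal (psiAux p s) * Complex.I))) s :=
      ((hLd s).neg).cexp
    have := (z_hasDeriv hp s).mul hE
    exact this.congr_deriv (by rw [← z_mul_L hreg s]; ring)
  have hconst : F t = F 0 := by
    have : ∀ x y, F x = F y := by
      apply is_const_of_deriv_eq_zero
      · exact fun s => (hFd s).differentiableAt
      · exact fun s => (hFd s).deriv
    exact this t 0
  have hF0 : F 0 = Complex.ofReal (‖zAux p 0‖) := by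
    have h0 : rhoIntAux p 0 = 0 := by simp [rhoIntAux]
    have h1 : thetaAux p 0 = (zAux p 0).arg := by simp [thetaAux]
    have habs := Complex.norm_mul_exp_arg_mul_I (zAux p 0)
    calc F 0 = zAux p 0 * Complex.exp (-(Complex.ofReal ((zAux p 0).arg) * Complex.I)) := by
          rw [hF]; simp only [hL, h0, h1, Complex.ofReal_zero, zero_add]
      _ = (Complex.ofReal (‖zAux p 0‖) *
          Complex.exp (Complex.ofReal ((zAux p 0).arg) * Complex.I)) *
            Complex.exp (-(Complex.ofReal ((zAux p 0).arg) * Complex.I)) := by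
          rw [habs]
      _ = _ := by rw [mul_assoc, ← Complex.exp_add]; simp
  have h2 : F t = Complex.ofReal (‖zAux p 0‖) := hconst.trans hF0
  replace h2 : zAux p t * Complex.exp (-(L t)) = Complex.ofReal (‖zAux p 0‖) := by
    rw [hF] at h2; exact h2
  have hzt : zAux p t = Complex.ofReal (‖zAux p 0‖) * Complex.exp (L t) := by
    have h3 : Complex.exp (-(L t)) * Complex.exp (L t) = 1 := by
      rw [← Complex.exp_add]; simp
    calc zAux p t = zAux p t * (Complex.exp (-(L t)) * Complex.exp (L t)) := by
          rw [h3, mul_one]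
      _ = (zAux p t * Complex.exp (-(L t))) * Complex.exp (L t) := by ring
      _ = _ := by rw [h2]
  rw [hzt, hL]
  simp only []
  rw [Complex.exp_add]
  push_cast [Complex.ofReal_exp]
  ring
end

section
variable {p : ℝ → ℝ}

lemma f_eq_cos (hp : ContDiff ℝ 3 p)
    (hreg : ∀ φ, 0 < (deriv p φ) ^ 2 + (deriv (deriv p) φ) ^ 2) (t : ℝ) :
    deriv p t = (‖zAux p 0‖ * Real.exp (rhoIntAux p t)) * Real.cos (thetaAux p t) := by
  have h := congrArg Complex.re (polar hp hreg t)
  simpa [zAux, Complex.exp_ofReal_mul_I_re, Complex.exp_ofReal_re] using h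

lemma f_zero_iff (hp : ContDiff ℝ 3 p)
    (hreg : ∀ φ, 0 < (deriv p φ) ^ 2 + (deriv (deriv p) φ) ^ 2) (t : ℝ) :
    deriv p t = 0 ↔ Real.cos (thetaAux p t) = 0 := by
  have hpos : 0 < ‖zAux p 0‖ * Real.exp (rhoIntAux p t) := by
    apply mul_pos _ (Real.exp_pos _)
    exact (norm_pos_iff.mpr (z_ne_zero hreg 0))
  rw [f_eq_cos hp hreg t]
  constructor
  · intro h
    rcases mul_eq_zero.mp h with h' | h'
    · exact absurd h' (ne_of_gt hpos)
    · exact h'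
  · intro h; rw [h, mul_zero]

lemma psi_at_zero (hreg : ∀ φ, 0 < (deriv p φ) ^ 2 + (deriv (deriv p) φ) ^ 2) (t : ℝ)
    (h : deriv p t = 0) : psiAux p t = -1 := by
  have h2 : deriv (deriv p) t ≠ 0 := by
    intro h'
    have := hreg t
    rw [h, h'] at this
    norm_num at this
  rw [psiAux]
  simp only [h]
  field_simp
  ring

end

section crossing
variable {θ ψ : ℝ → ℝ} {c : ℝ}

lemma stay_below (hθ : ∀ t, HasDerivAt θ (ψ t) t) (hc : ∀ t, θ t = c → ψ t < 0) :
    ∀ s u, s ≤ u → θ s < c → θ u < c := by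
  intro s u hsu hs
  rcases eq_or_lt_of_le hsu with rfl | hsu
  · exact hs
  by_contra hcon
  push_neg at hcon
  set A : Set ℝ := {t | t ∈ Set.Icc s u ∧ c ≤ θ t} with hA
  have hθcont : Continuous θ := by
    have : Differentiable ℝ θ := fun t => (hθ t).differentiableAt
    exact this.continuous
  have hclosed : IsClosed A := (isClosed_Icc).inter (isClosed_le continuous_const hθcont)
  have hne : A.Nonempty := ⟨u, ⟨le_of_lt hsu, le_refl u⟩, hcon⟩
  have hbdd : BddBelow A := ⟨s, fun t ht => ht.1.1⟩
  set t₀ := sInf A with ht₀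
  have ht₀A : t₀ ∈ A := IsClosed.csInf_mem hclosed hne hbdd
  have hst₀ : s < t₀ := by
    rcases lt_or_eq_of_le ht₀A.1.1 with h | h
    · exact h
    · exfalso; rw [← h] at ht₀A; exact absurd ht₀A.2 (not_le.mpr hs)
  have hbelow : ∀ t, t ∈ Set.Ico s t₀ → θ t < c := by
    intro t ht
    by_contra h
    push_neg at h
    have : t ∈ A := ⟨⟨ht.1, le_trans (le_of_lt ht.2) ht₀A.1.2⟩, h⟩
    exact absurd (csInf_le hbdd this) (not_le.mpr ht.2)
  have hθt₀ : θ t₀ = c := by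
    refine le_antisymm ?_ ht₀A.2
    have htend : Filter.Tendsto θ (nhdsWithin t₀ (Set.Iio t₀)) (nhds (θ t₀)) :=
      (hθcont.continuousAt).continuousWithinAt.tendsto
    refine le_of_tendsto htend ?_
    filter_upwards [Ioo_mem_nhdsLT_of_mem (Set.mem_Ioc.mpr ⟨hst₀, le_refl t₀⟩)] with t ht
    exact le_of_lt (hbelow t ⟨le_of_lt ht.1, ht.2⟩)
  have hψ : ψ t₀ < 0 := hc t₀ hθt₀
  have hslope : Filter.Tendsto (slope θ t₀) (nhdsWithin t₀ {t₀}ᶜ) (nhds (ψ t₀)) :=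
    hasDerivAt_iff_tendsto_slope.mp (hθ t₀)
  have hslope' : Filter.Tendsto (slope θ t₀) (nhdsWithin t₀ (Set.Iio t₀)) (nhds (ψ t₀)) :=
    hslope.mono_left (nhdsWithin_mono t₀ (fun x hx => ne_of_lt hx))
  have hev : ∀ᶠ t in nhdsWithin t₀ (Set.Iio t₀), slope θ t₀ t < 0 :=
    hslope'.eventually_lt_const hψ
  have hev2 : ∀ᶠ t in nhdsWithin t₀ (Set.Iio t₀), t ∈ Set.Ioo s t₀ :=
    Filter.eventually_mem_set.mpr (Ioo_mem_nhdsLT_of_mem (Set.mem_Ioc.mpr ⟨hst₀, le_refl t₀⟩))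
  have : ∃ t, slope θ t₀ t < 0 ∧ t ∈ Set.Ioo s t₀ := (hev.and hev2).exists
  obtain ⟨t, hts, htio⟩ := this
  have hlt : θ t < c := hbelow t ⟨le_of_lt htio.1, htio.2⟩
  have hpos : 0 < θ t - θ t₀ := by
    rw [slope_def_field] at hts
    rcases div_neg_iff.mp hts with ⟨h1, h2⟩ | ⟨h1, h2⟩
    · exact h1
    · exfalso; have : t - t₀ < 0 := sub_neg.mpr htio.2; linarith
  rw [hθt₀] at hpos
  linarith
end crossing

section crossing2
variable {θ ψ : ℝ → ℝ} {c : ℝ}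

lemma after_cross (hθ : ∀ t, HasDerivAt θ (ψ t) t) (hc : ∀ t, θ t = c → ψ t < 0)
    {t₀ u : ℝ} (h : θ t₀ = c) (hu : t₀ < u) : θ u < c := by
  have hψ : ψ t₀ < 0 := hc t₀ h
  have hslope : Filter.Tendsto (slope θ t₀) (nhdsWithin t₀ {t₀}ᶜ) (nhds (ψ t₀)) :=
    hasDerivAt_iff_tendsto_slope.mp (hθ t₀)
  have hslope' : Filter.Tendsto (slope θ t₀) (nhdsWithin t₀ (Set.Ioi t₀)) (nhds (ψ t₀)) :=
    hslope.mono_left (nhdsWithin_mono t₀ (fun x hx => ne_of_gt hx))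
  have hev : ∀ᶠ t in nhdsWithin t₀ (Set.Ioi t₀), slope θ t₀ t < 0 :=
    hslope'.eventually_lt_const hψ
  have hev2 : ∀ᶠ t in nhdsWithin t₀ (Set.Ioi t₀), t ∈ Set.Ioo t₀ u :=
    Filter.eventually_mem_set.mpr (Ioo_mem_nhdsGT_of_mem (Set.mem_Ico.mpr ⟨le_refl t₀, hu⟩))
  obtain ⟨s, hs1, hs2⟩ := (hev.and hev2).exists
  have hθs : θ s < c := by
    rw [slope_def_field] at hs1
    rcases div_neg_iff.mp hs1 with ⟨h1, h2⟩ | ⟨h1, h2⟩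
    · exfalso; have : 0 < s - t₀ := sub_pos.mpr hs2.1; linarith
    · rw [← h]; linarith
  exact stay_below hθ hc s u (le_of_lt hs2.2) hθs

lemma cross_unique (hθ : ∀ t, HasDerivAt θ (ψ t) t) (hc : ∀ t, θ t = c → ψ t < 0)
    {t₁ t₂ : ℝ} (h₁ : θ t₁ = c) (h₂ : θ t₂ = c) : t₁ = t₂ := by
  rcases lt_trichotomy t₁ t₂ with h | h | h
  · exact absurd h₂ (ne_of_lt (after_cross hθ hc h₁ h))
  · exact h
  · exact absurd h₁ (ne_of_lt (after_cross hθ hc h₂ h))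
end crossing2

section
variable {p : ℝ → ℝ}

lemma z_periodic (hper : Function.Periodic p (2 * π)) : zAux p (2 * π) = zAux p 0 := by
  have hf : Function.Periodic (deriv p) (2 * π) := per_deriv hper
  have hf' : Function.Periodic (deriv (deriv p)) (2 * π) := per_deriv hf
  have h1 := hf 0
  have h2 := hf' 0
  simp only [zero_add] at h1 h2
  unfold zAux
  rw [h1, h2]

lemma theta_periodic (hp : ContDiff ℝ 3 p)
    (hreg : ∀ φ, 0 < (deriv p φ) ^ 2 + (deriv (deriv p) φ) ^ 2)
    (hper : Function.Periodic p (2 * π)) :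
    ∃ k : ℤ, thetaAux p (2 * π) = thetaAux p 0 + 2 * π * k := by
  have e1 := polar hp hreg (2 * π)
  have e0 := polar hp hreg 0
  have hz := z_periodic hper
  have heq : Complex.ofReal (‖zAux p 0‖) *
        Complex.exp (Complex.ofReal (rhoIntAux p (2 * π)) + Complex.ofReal (thetaAux p (2 * π)) * Complex.I)
      = Complex.ofReal (‖zAux p 0‖) *
        Complex.exp (Complex.ofReal (rhoIntAux p 0) + Complex.ofReal (thetaAux p 0) * Complex.I) := by
    rw [Complex.exp_add, Complex.exp_add]
    push_cast [Complex.ofReal_exp] at e1 e0 ⊢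
    rw [← mul_assoc, ← mul_assoc, ← e1, ← e0]
    exact hz
  have hA : Complex.ofReal (‖zAux p 0‖) ≠ 0 := by
    simp only [ne_eq, Complex.ofReal_eq_zero]
    exact ne_of_gt (norm_pos_iff.mpr (z_ne_zero hreg 0))
  have heq2 := mul_left_cancel₀ hA heq
  obtain ⟨k, hk⟩ := Complex.exp_eq_exp_iff_exists_int.mp heq2
  refine ⟨k, ?_⟩
  have him := congrArg Complex.im hk
  simp only [Complex.add_im, Complex.ofReal_im, Complex.mul_im, Complex.I_im, Complex.I_re,
    Complex.ofReal_re, mul_zero, mul_one, zero_add, add_zero, Complex.intCast_im,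
    Complex.intCast_re, zero_mul] at him
  norm_num at him
  linarith
end

section
variable {p : ℝ → ℝ}

lemma integrand_eq (hp : ContDiff ℝ 3 p)
    (hreg : ∀ φ, 0 < (deriv p φ) ^ 2 + (deriv (deriv p) φ) ^ 2)
    (e : ℝ → ℝ × ℝ)
    (he : ∀ φ, e φ = deriv p φ • (-Real.sin φ, Real.cos φ)
        - deriv (deriv p) φ • (Real.cos φ, Real.sin φ)) (φ : ℝ) :
    ((e φ).1 * (deriv e φ).2 - (e φ).2 * (deriv e φ).1) / ((e φ).1 ^ 2 + (e φ).2 ^ 2)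
      = 1 + psiAux p φ := by
  have hefun : e = fun x => (deriv p x * (-Real.sin x) - deriv (deriv p) x * Real.cos x,
      deriv p x * Real.cos x - deriv (deriv p) x * Real.sin x) := by
    funext x
    rw [he x]
    simp [Prod.ext_iff, mul_comm]
  have hf : HasDerivAt (deriv p) (deriv (deriv p) φ) φ := ((diff_f hp) φ).hasDerivAt
  have hf' : HasDerivAt (deriv (deriv p)) (deriv (deriv (deriv p)) φ) φ :=
    ((diff_f' hp) φ).hasDerivAt
  have hd1 : HasDerivAt (fun x => deriv p x * (-Real.sin x) - deriv (deriv p) x * Real.cos x)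
      ((deriv (deriv p) φ * (-Real.sin φ) + deriv p φ * (-Real.cos φ)) -
        (deriv (deriv (deriv p)) φ * Real.cos φ + deriv (deriv p) φ * (-Real.sin φ))) φ := by
    exact (hf.mul (Real.hasDerivAt_sin φ).neg).sub (hf'.mul (Real.hasDerivAt_cos φ))
  have hd2 : HasDerivAt (fun x => deriv p x * Real.cos x - deriv (deriv p) x * Real.sin x)
      ((deriv (deriv p) φ * Real.cos φ + deriv p φ * (-Real.sin φ)) -
        (deriv (deriv (deriv p)) φ * Real.sin φ + deriv (deriv p) φ * Real.cos φ)) φ := by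
    exact (hf.mul (Real.hasDerivAt_cos φ)).sub (hf'.mul (Real.hasDerivAt_sin φ))
  have hprod : HasDerivAt e (
      (deriv (deriv p) φ * (-Real.sin φ) + deriv p φ * (-Real.cos φ)) -
        (deriv (deriv (deriv p)) φ * Real.cos φ + deriv (deriv p) φ * (-Real.sin φ)),
      (deriv (deriv p) φ * Real.cos φ + deriv p φ * (-Real.sin φ)) -
        (deriv (deriv (deriv p)) φ * Real.sin φ + deriv (deriv p) φ * Real.cos φ)) φ := by
    rw [hefun]
    exact hd1.prodMk hd2
  have hde := hprod.deriv
  have hsc : Real.sin φ ^ 2 + Real.cos φ ^ 2 = 1 := Real.sin_sq_add_cos_sq φ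
  have he1 : (e φ).1 = deriv p φ * (-Real.sin φ) - deriv (deriv p) φ * Real.cos φ := by
    rw [hefun]
  have he2 : (e φ).2 = deriv p φ * Real.cos φ - deriv (deriv p) φ * Real.sin φ := by
    rw [hefun]
  have hnum : (e φ).1 * (deriv e φ).2 - (e φ).2 * (deriv e φ).1
      = (deriv p φ) ^ 2 + deriv p φ * deriv (deriv (deriv p)) φ := by
    rw [he1, he2, hde]
    simp only []
    linear_combination (deriv p φ + deriv (deriv (deriv p)) φ) * deriv p φ * hsc
  have hden : (e φ).1 ^ 2 + (e φ).2 ^ 2 = (deriv p φ) ^ 2 + (deriv (deriv p) φ) ^ 2 := by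
    rw [he1, he2]
    linear_combination ((deriv p φ) ^ 2 + (deriv (deriv p) φ) ^ 2) * hsc
  rw [hnum, hden, psiAux]
  have hD : (deriv p φ) ^ 2 + (deriv (deriv p) φ) ^ 2 ≠ 0 := ne_of_gt (hreg φ)
  field_simp
  ring
end

theorem winding_number_evolute_equilibria
    (p : ℝ → ℝ) (hper : Function.Periodic p (2 * π)) (hp : ContDiff ℝ 3 p)
    (hreg : ∀ φ, 0 < (deriv p φ) ^ 2 + (deriv (deriv p) φ) ^ 2)
    (e : ℝ → ℝ × ℝ)
    (he : ∀ φ, e φ = deriv p φ • (-Real.sin φ, Real.cos φ)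
        - deriv (deriv p) φ • (Real.cos φ, Real.sin φ))
    (m : ℝ)
    (hm : m = (1 / (2 * π)) * ∫ φ in (0:ℝ)..(2 * π),
        ((e φ).1 * (deriv e φ).2 - (e φ).2 * (deriv e φ).1)
          / ((e φ).1 ^ 2 + (e φ).2 ^ 2))
    (n : ℕ)
    (hn : n = {φ ∈ Set.Ico (0:ℝ) (2 * π) | deriv p φ = 0}.ncard) :
    m = 1 - (n : ℝ) / 2 ∧ m ≤ 0 ∧ (n : ℝ) = 2 - 2 * m := by
  have hπ : (0:ℝ) < π := Real.pi_pos
  obtain ⟨k, hk⟩ := theta_periodic hp hreg hper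
  have hθd : ∀ t, HasDerivAt (thetaAux p) (psiAux p t) t := theta_hasDeriv hp hreg
  have hθdiff : Differentiable ℝ (thetaAux p) := fun t => (hθd t).differentiableAt
  have hθcont : Continuous (thetaAux p) := hθdiff.continuous
  have hcross : ∀ c : ℝ, Real.cos c = 0 → ∀ s, thetaAux p s = c → psiAux p s < 0 := by
    intro c hcos s hs
    have hcs : Real.cos (thetaAux p s) = 0 := by rw [hs]; exact hcos
    have hf0 : deriv p s = 0 := (f_zero_iff hp hreg s).mpr hcs
    rw [psi_at_zero hreg s hf0]
    norm_num
  -- m = 1 + k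
  have hm2 : m = 1 + (k : ℝ) := by
    rw [hm]
    rw [intervalIntegral.integral_congr (g := fun φ => 1 + psiAux p φ)
      (fun φ _ => integrand_eq hp hreg e he φ)]
    have hψint : IntervalIntegrable (psiAux p) MeasureTheory.volume 0 (2*π) :=
      (cont_psi hp hreg).intervalIntegrable _ _
    rw [intervalIntegral.integral_add intervalIntegrable_const hψint,
      intervalIntegral.integral_const]
    have hintψ : ∫ s in (0:ℝ)..(2*π), psiAux p s = 2*π*(k:ℝ) := by
      have h1 : thetaAux p (2*π) - thetaAux p 0 = ∫ s in (0:ℝ)..(2*π), psiAux p s := by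
        simp [thetaAux]
      rw [hk] at h1
      linarith
    rw [hintψ]
    have hπne : (π:ℝ) ≠ 0 := ne_of_gt hπ
    simp only [smul_eq_mul, sub_zero, mul_one]
    field_simp
  -- zeros are crossings
  have hbounds : ∀ t ∈ Set.Ico (0:ℝ) (2*π), deriv p t = 0 →
      thetaAux p (2*π) < thetaAux p t ∧ thetaAux p t ≤ thetaAux p 0 := by
    intro t ht hzero
    have hcos : Real.cos (thetaAux p t) = 0 := (f_zero_iff hp hreg t).mp hzero
    have hc := hcross _ hcos
    constructor
    · exact after_cross hθd hc rfl ht.2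
    · by_contra hgt
      push_neg at hgt
      exact lt_irrefl _ (stay_below hθd hc 0 t ht.1 hgt)
  -- existence of a zero of deriv p in [0, 2π)
  have hexzero : ∃ t ∈ Set.Ico (0:ℝ) (2*π), deriv p t = 0 := by
    obtain ⟨ts, htsmem, hmax⟩ := isCompact_Icc.exists_isMaxOn
      (Set.nonempty_Icc.mpr (by positivity : (0:ℝ) ≤ 2*π)) hp.continuous.continuousOn
    have hglobal : ∀ s, p s ≤ p ts := by
      intro s
      obtain ⟨y, hy, hpy⟩ := hper.exists_mem_Ico₀ (by positivity) s
      rw [hpy]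
      exact hmax (Set.Ico_subset_Icc_self hy)
    have hlocal : IsLocalMax p ts := by
      have : IsMaxOn p Set.univ ts := fun s _ => hglobal s
      exact this.isLocalMax Filter.univ_mem
    have hd0 : deriv p ts = 0 := hlocal.deriv_eq_zero
    rcases lt_or_eq_of_le htsmem.2 with h | h
    · exact ⟨ts, ⟨htsmem.1, h⟩, hd0⟩
    · refine ⟨0, ⟨le_refl 0, by positivity⟩, ?_⟩
      have hfper := (per_deriv hper : Function.Periodic (deriv p) (2*π)) 0
      simp only [zero_add] at hfper
      rw [h, hfper] at hd0
      exact hd0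
  obtain ⟨t₀, ht₀mem, ht₀zero⟩ := hexzero
  -- k ≤ -1
  have hkneg : k ≤ -1 := by
    have h1 := hbounds t₀ ht₀mem ht₀zero
    have h2 : thetaAux p (2*π) < thetaAux p 0 := lt_of_lt_of_le h1.1 h1.2
    rw [hk] at h2
    by_contra hge
    push_neg at hge
    have hk0 : (0:ℝ) ≤ (k:ℝ) := by
      have : (0:ℤ) ≤ k := by omega
      exact_mod_cast this
    nlinarith
  -- the counting
  set S : Set ℝ := {φ ∈ Set.Ico (0:ℝ) (2*π) | deriv p φ = 0} with hS
  set C : Set ℝ := {c : ℝ | Real.cos c = 0 ∧ thetaAux p (2*π) < c ∧ c ≤ thetaAux p 0} with hC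
  have himg : thetaAux p '' S = C := by
    apply Set.Subset.antisymm
    · rintro c ⟨t, ⟨htIco, htz⟩, rfl⟩
      exact ⟨(f_zero_iff hp hreg t).mp htz, hbounds t htIco htz⟩
    · rintro c ⟨hcos, hlt, hle⟩
      rcases eq_or_lt_of_le hle with h | h
      · refine ⟨0, ⟨⟨le_refl 0, by positivity⟩, ?_⟩, h.symm⟩
        apply (f_zero_iff hp hreg 0).mpr
        rw [← h]
        exact hcos
      · have hIcc : c ∈ Set.Icc (thetaAux p (2*π)) (thetaAux p 0) := ⟨le_of_lt hlt, hle⟩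
        obtain ⟨t, htIcc, hθt⟩ := intermediate_value_Icc' (by positivity : (0:ℝ) ≤ 2*π)
          hθcont.continuousOn hIcc
        have htlt : t < 2*π := by
          rcases lt_or_eq_of_le htIcc.2 with h' | h'
          · exact h'
          · exfalso; rw [h'] at hθt; rw [hθt] at hlt; exact lt_irrefl _ hlt
        refine ⟨t, ⟨⟨htIcc.1, htlt⟩, ?_⟩, hθt⟩
        apply (f_zero_iff hp hreg t).mpr
        rw [hθt]
        exact hcos
  have hinj : Set.InjOn (thetaAux p) S := by
    intro t₁ h₁ t₂ h₂ heq
    have hcos : Real.cos (thetaAux p t₁) = 0 := (f_zero_iff hp hreg t₁).mp h₁.2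
    exact cross_unique hθd (hcross _ hcos) rfl heq.symm
  -- identify C with an integer interval
  set x : ℝ := thetaAux p 0 / π - 1/2 with hx
  set a : ℤ := ⌊x⌋ with ha
  have hxπ : x * π = thetaAux p 0 - π/2 := by
    rw [hx]
    field_simp
  have hgC : C = (fun j : ℤ => (2*(j:ℝ)+1)*π/2) '' (↑(Finset.Ioc (a + 2*k) a) : Set ℤ) := by
    ext c
    constructor
    · rintro ⟨hcos, hlt, hle⟩
      obtain ⟨j, rfl⟩ := Real.cos_eq_zero_iff.mp hcos
      refine ⟨j, ?_, rfl⟩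
      simp only [Finset.coe_Ioc, Set.mem_Ioc]
      rw [hk] at hlt
      constructor
      · have h1 : (x + 2*(k:ℝ)) * π < (j:ℝ) * π := by
          rw [add_mul, hxπ]
          nlinarith [hlt]
        have h2 : x + 2*(k:ℝ) < (j:ℝ) := (mul_lt_mul_iff_of_pos_right hπ).mp h1
        have h3 : ⌊x + ((2*k : ℤ) : ℝ)⌋ < j := Int.floor_lt.mpr (by push_cast; linarith)
        rw [Int.floor_add_intCast] at h3
        omega
      · have h1 : (j:ℝ) * π ≤ x * π := by
          rw [hxπ]
          nlinarith [hle]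
        exact Int.le_floor.mpr ((mul_le_mul_iff_of_pos_right hπ).mp h1)
    · rintro ⟨j, hj, rfl⟩
      simp only [Finset.coe_Ioc, Set.mem_Ioc] at hj
      have hj2 : (j:ℝ) ≤ x := by
        have := Int.le_floor.mp hj.2
        exact_mod_cast this
      have hj1 : x + 2*(k:ℝ) < (j:ℝ) := by
        have h3 : ⌊x + ((2*k : ℤ) : ℝ)⌋ < j := by
          rw [Int.floor_add_intCast]
          omega
        have := Int.floor_lt.mp h3
        push_cast at this
        linarith
      refine ⟨Real.cos_eq_zero_iff.mpr ⟨j, rfl⟩, ?_, ?_⟩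
      · rw [hk]
        have h1 : (x + 2*(k:ℝ)) * π < (j:ℝ) * π := (mul_lt_mul_iff_of_pos_right hπ).mpr hj1
        rw [add_mul, hxπ] at h1
        nlinarith [h1]
      · have h1 : (j:ℝ) * π ≤ x * π := (mul_le_mul_iff_of_pos_right hπ).mpr hj2
        rw [hxπ] at h1
        nlinarith [h1]
  have hginj : Function.Injective (fun j : ℤ => (2*(j:ℝ)+1)*π/2) := by
    intro j₁ j₂ h
    simp only at h
    have hc : (2*(j₁:ℝ)+1)*π = (2*(j₂:ℝ)+1)*π := by linarith [h]
    have hc2 := mul_right_cancel₀ (ne_of_gt hπ) hc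
    have : (j₁:ℝ) = (j₂:ℝ) := by linarith
    exact_mod_cast this
  have hncard : n = (Finset.Ioc (a + 2*k) a).card := by
    rw [hn, ← Set.ncard_image_of_injOn hinj, himg, hgC,
      Set.ncard_image_of_injective _ hginj, Set.ncard_coe_finset]
  have hcard : (Finset.Ioc (a + 2*k) a).card = (-(2*k)).toNat := by
    rw [Int.card_Ioc]
    congr 1
    ring
  have hnk : (n:ℝ) = -2*(k:ℝ) := by
    rw [hncard, hcard]
    have h0 : (0:ℤ) ≤ -(2*k) := by omega
    have h1 : ((-(2*k)).toNat : ℤ) = -(2*k) := Int.toNat_of_nonneg h0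
    have h2 : (((-(2*k)).toNat : ℕ) : ℝ) = ((-(2*k) : ℤ) : ℝ) := by exact_mod_cast h1
    rw [h2]
    push_cast
    ring
  have hkR : (k:ℝ) ≤ -1 := by exact_mod_cast hkneg
  refine ⟨by rw [hm2, hnk]; ring, by rw [hm2]; linarith, by rw [hm2, hnk]; ring⟩
end

section
/- Let p be C^k on a neighborhood of 0, k ≥ 3, and suppose p'(0) = p''(0) = ... = p^{(k-1)}(0) = 0 but p^{(k)}(0) ≠ 0 (p' has a zero of order k-1 at 0). Then lim_{φ→0} (p''(φ)² - p'(φ)p'''(φ))/(p'(φ)² + p''(φ)²) = 1/(k-1). -/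
open Real

lemma contDiffAt_deriv_aux {f : ℝ → ℝ} {x : ℝ} {n : ℕ}
    (hf : ContDiffAt ℝ (n + 1) f x) : ContDiffAt ℝ n (deriv f) x := by
  have h : ContDiffAt ℝ n (fderiv ℝ f) x := by
    apply hf.fderiv_right
    norm_cast
  have heq : deriv f = fun y => fderiv ℝ f y 1 := by
    funext y; exact (fderiv_apply_one_eq_deriv).symm
  rw [heq]
  exact h.clm_apply contDiffAt_const

lemma tendsto_div_pow_of_iteratedDeriv_zero :
    ∀ (m : ℕ) (f : ℝ → ℝ), ContDiffAt ℝ m f 0 →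
      (∀ j, j < m → iteratedDeriv j f 0 = 0) →
      Filter.Tendsto (fun x => f x / x ^ m) (nhdsWithin 0 {(0:ℝ)}ᶜ)
        (nhds (iteratedDeriv m f 0 / (m.factorial : ℝ))) := by
  intro m
  induction m with
  | zero =>
    intro f hf _
    simp only [pow_zero, Nat.factorial_zero, Nat.cast_one, div_one, iteratedDeriv_zero]
    exact (hf.continuousAt.tendsto).mono_left nhdsWithin_le_nhds
  | succ m ih =>
    intro f hf hz
    have hf' : ContDiffAt ℝ m (deriv f) 0 := contDiffAt_deriv_aux hf
    have hz' : ∀ j, j < m → iteratedDeriv j (deriv f) 0 = 0 := by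
      intro j hj
      rw [← iteratedDeriv_succ']
      exact hz (j + 1) (by omega)
    have hdiv0 := ih (deriv f) hf' hz'
    have hkey : iteratedDeriv m (deriv f) 0 = iteratedDeriv (m + 1) f 0 := by
      rw [← iteratedDeriv_succ']
    -- eventual differentiability
    have hev : ∀ᶠ y in nhds (0:ℝ), ContDiffAt ℝ (m + 1) f y := by
      apply hf.eventually
      simp
    have hff' : ∀ᶠ x in nhdsWithin 0 {(0:ℝ)}ᶜ, HasDerivAt f (deriv f x) x := by
      apply Filter.Eventually.filter_mono nhdsWithin_le_nhds
      filter_upwards [hev] with y hy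
      have h1 : (1 : WithTop ℕ∞) ≤ ((m : WithTop ℕ∞) + 1) := le_add_self
      exact (hy.differentiableAt (by simp)).hasDerivAt
    have hgg' : ∀ᶠ x in nhdsWithin 0 {(0:ℝ)}ᶜ,
        HasDerivAt (fun y : ℝ => y ^ (m + 1)) ((m + 1 : ℕ) * x ^ m) x := by
      filter_upwards with x
      simpa using hasDerivAt_pow (m + 1) x
    have hg' : ∀ᶠ x in nhdsWithin 0 {(0:ℝ)}ᶜ, ((m + 1 : ℕ) : ℝ) * x ^ m ≠ 0 := by
      filter_upwards [self_mem_nhdsWithin] with x hx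
      have hx0 : x ≠ 0 := hx
      positivity
    have hfa : Filter.Tendsto f (nhdsWithin 0 {(0:ℝ)}ᶜ) (nhds 0) := by
      have h0 : f 0 = 0 := by simpa [iteratedDeriv_zero] using hz 0 (by omega)
      have := hf.continuousAt.tendsto
      rw [h0] at this
      exact this.mono_left nhdsWithin_le_nhds
    have hga : Filter.Tendsto (fun x : ℝ => x ^ (m + 1)) (nhdsWithin 0 {(0:ℝ)}ᶜ)
        (nhds 0) := by
      have : Filter.Tendsto (fun x : ℝ => x ^ (m + 1)) (nhds 0) (nhds (0 ^ (m + 1))) :=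
        (continuous_pow (m + 1)).continuousAt
      simpa [zero_pow (Nat.succ_ne_zero m)] using this.mono_left nhdsWithin_le_nhds
    have hdiv : Filter.Tendsto (fun x => deriv f x / (((m + 1 : ℕ) : ℝ) * x ^ m))
        (nhdsWithin 0 {(0:ℝ)}ᶜ)
        (nhds (iteratedDeriv (m + 1) f 0 / ((m + 1).factorial : ℝ))) := by
      have h2 : Filter.Tendsto (fun x => deriv f x / x ^ m / ((m + 1 : ℕ) : ℝ))
          (nhdsWithin 0 {(0:ℝ)}ᶜ)
          (nhds (iteratedDeriv m (deriv f) 0 / (m.factorial : ℝ) / ((m + 1 : ℕ) : ℝ))) :=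
        hdiv0.div_const _
      have heq : ∀ x : ℝ, deriv f x / (((m + 1 : ℕ) : ℝ) * x ^ m)
          = deriv f x / x ^ m / ((m + 1 : ℕ) : ℝ) := by
        intro x
        rw [div_div, mul_comm]
      simp only [heq]
      have hval : iteratedDeriv m (deriv f) 0 / (m.factorial : ℝ) / ((m + 1 : ℕ) : ℝ)
          = iteratedDeriv (m + 1) f 0 / ((m + 1).factorial : ℝ) := by
        rw [hkey, div_div, Nat.factorial_succ]
        push_cast
        ring_nf
      rwa [hval] at h2
    exact HasDerivAt.lhopital_zero_nhdsNE hff' hgg' hg' hfa hga hdiv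

theorem limit_zero_counting_integrand
    (p : ℝ → ℝ) (k : ℕ) (hk : 3 ≤ k) (hp : ContDiffAt ℝ k p 0)
    (hzero : ∀ j, 1 ≤ j → j ≤ k - 1 → iteratedDeriv j p 0 = 0)
    (hne : iteratedDeriv k p 0 ≠ 0) :
    Filter.Tendsto
      (fun φ => ((deriv (deriv p) φ) ^ 2 - deriv p φ * deriv (deriv (deriv p)) φ)
          / ((deriv p φ) ^ 2 + (deriv (deriv p) φ) ^ 2))
      (nhdsWithin 0 {(0:ℝ)}ᶜ) (nhds (1 / ((k : ℝ) - 1))) := by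
  obtain ⟨n, rfl⟩ : ∃ n, k = n + 3 := ⟨k - 3, by omega⟩
  set c : ℝ := iteratedDeriv (n + 3) p 0 with hc
  -- regularity of successive derivatives
  have hp1 : ContDiffAt ℝ (n + 2) (deriv p) 0 := contDiffAt_deriv_aux hp
  have hp2 : ContDiffAt ℝ (n + 1) (deriv (deriv p)) 0 := contDiffAt_deriv_aux hp1
  have hp3 : ContDiffAt ℝ n (deriv (deriv (deriv p))) 0 := contDiffAt_deriv_aux hp2
  -- iterated derivative identities
  have hid1 : ∀ j : ℕ, iteratedDeriv j (deriv p) 0 = iteratedDeriv (j + 1) p 0 := by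
    intro j; rw [iteratedDeriv_succ']
  have hid2 : ∀ j : ℕ, iteratedDeriv j (deriv (deriv p)) 0 = iteratedDeriv (j + 2) p 0 := by
    intro j; rw [show j + 2 = j + 1 + 1 from rfl, iteratedDeriv_succ', iteratedDeriv_succ']
  have hid3 : ∀ j : ℕ,
      iteratedDeriv j (deriv (deriv (deriv p))) 0 = iteratedDeriv (j + 3) p 0 := by
    intro j
    rw [show j + 3 = j + 1 + 1 + 1 from rfl, iteratedDeriv_succ', iteratedDeriv_succ',
      iteratedDeriv_succ']
  have g0 : Filter.Tendsto (fun x => deriv p x / x ^ (n + 2)) (nhdsWithin 0 {(0:ℝ)}ᶜ)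
      (nhds (c / ((n + 2).factorial : ℝ))) := by
    have := tendsto_div_pow_of_iteratedDeriv_zero (n + 2) (deriv p) hp1 (by
      intro j hj; rw [hid1 j]; exact hzero (j + 1) (by omega) (by omega))
    rwa [hid1 (n + 2)] at this
  have g1 : Filter.Tendsto (fun x => deriv (deriv p) x / x ^ (n + 1)) (nhdsWithin 0 {(0:ℝ)}ᶜ)
      (nhds (c / ((n + 1).factorial : ℝ))) := by
    have := tendsto_div_pow_of_iteratedDeriv_zero (n + 1) (deriv (deriv p)) hp2 (by
      intro j hj; rw [hid2 j]; exact hzero (j + 2) (by omega) (by omega))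
    rwa [hid2 (n + 1)] at this
  have g2 : Filter.Tendsto (fun x => deriv (deriv (deriv p)) x / x ^ n)
      (nhdsWithin 0 {(0:ℝ)}ᶜ) (nhds (c / (n.factorial : ℝ))) := by
    have := tendsto_div_pow_of_iteratedDeriv_zero n (deriv (deriv (deriv p))) hp3 (by
      intro j hj; rw [hid3 j]; exact hzero (j + 3) (by omega) (by omega))
    rwa [hid3 n] at this
  have hx : Filter.Tendsto (fun x : ℝ => x) (nhdsWithin 0 {(0:ℝ)}ᶜ) (nhds 0) :=
    Filter.tendsto_id.mono_left nhdsWithin_le_nhds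
  -- auxiliary limits
  set L0 : ℝ := c / ((n + 2).factorial : ℝ)
  set L1 : ℝ := c / ((n + 1).factorial : ℝ)
  set L2 : ℝ := c / (n.factorial : ℝ)
  have hnum : Filter.Tendsto
      (fun x => (deriv (deriv p) x / x ^ (n + 1)) ^ 2
        - (deriv p x / x ^ (n + 2)) * (deriv (deriv (deriv p)) x / x ^ n))
      (nhdsWithin 0 {(0:ℝ)}ᶜ) (nhds (L1 ^ 2 - L0 * L2)) :=
    (g1.pow 2).sub (g0.mul g2)
  have hden : Filter.Tendsto
      (fun x => x ^ 2 * (deriv p x / x ^ (n + 2)) ^ 2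
        + (deriv (deriv p) x / x ^ (n + 1)) ^ 2)
      (nhdsWithin 0 {(0:ℝ)}ᶜ) (nhds (0 ^ 2 * L0 ^ 2 + L1 ^ 2)) :=
    (((hx.pow 2).mul (g0.pow 2))).add (g1.pow 2)
  have hfact1 : ((n + 1).factorial : ℝ) ≠ 0 := by positivity
  have hL1 : L1 ≠ 0 := div_ne_zero hne hfact1
  have hBne : (0:ℝ) ^ 2 * L0 ^ 2 + L1 ^ 2 ≠ 0 := by
    have : (0:ℝ) ^ 2 * L0 ^ 2 + L1 ^ 2 = L1 ^ 2 := by ring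
    rw [this]; positivity
  have hG : Filter.Tendsto
      (fun x => ((deriv (deriv p) x / x ^ (n + 1)) ^ 2
          - (deriv p x / x ^ (n + 2)) * (deriv (deriv (deriv p)) x / x ^ n))
        / (x ^ 2 * (deriv p x / x ^ (n + 2)) ^ 2
          + (deriv (deriv p) x / x ^ (n + 1)) ^ 2))
      (nhdsWithin 0 {(0:ℝ)}ᶜ)
      (nhds ((L1 ^ 2 - L0 * L2) / (0 ^ 2 * L0 ^ 2 + L1 ^ 2))) :=
    hnum.div hden hBne
  -- the limit value equals 1/(k-1)
  have hval : (L1 ^ 2 - L0 * L2) / ((0:ℝ) ^ 2 * L0 ^ 2 + L1 ^ 2)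
      = 1 / (((n : ℝ) + 3) - 1) := by
    have hf0 : ((n).factorial : ℝ) ≠ 0 := by positivity
    have e1 : ((n + 1).factorial : ℝ) = ((n : ℝ) + 1) * (n.factorial : ℝ) := by
      rw [Nat.factorial_succ]; push_cast; ring
    have e2 : ((n + 2).factorial : ℝ) = ((n : ℝ) + 2) * (((n : ℝ) + 1) * (n.factorial : ℝ)) := by
      rw [show n + 2 = (n + 1) + 1 from rfl, Nat.factorial_succ, Nat.factorial_succ]
      push_cast; ring
    simp only [hc, L0, L1, L2, e1, e2]
    have h1 : (n : ℝ) + 1 ≠ 0 := by positivity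
    have h2 : (n : ℝ) + 2 ≠ 0 := by positivity
    have h3 : ((n : ℝ) + 3) - 1 ≠ 0 := by
      have : ((n : ℝ) + 3) - 1 = (n : ℝ) + 2 := by ring
      rw [this]; positivity
    have hne' : iteratedDeriv (n + 3) p 0 ≠ 0 := hne
    field_simp
    ring
  rw [show ((((n + 3 : ℕ)) : ℝ) - 1) = ((n : ℝ) + 3) - 1 by push_cast; ring]
  rw [← hval]
  -- show the original function eventually agrees with G
  apply hG.congr'
  filter_upwards [self_mem_nhdsWithin] with x hx0
  have hxne : x ≠ 0 := hx0
  have hxp : (x : ℝ) ^ (2 * n + 2) ≠ 0 := pow_ne_zero _ hxne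
  set d1 := deriv p x
  set d2 := deriv (deriv p) x
  set d3 := deriv (deriv (deriv p)) x
  have enum : (d2 / x ^ (n + 1)) ^ 2 - (d1 / x ^ (n + 2)) * (d3 / x ^ n)
      = (d2 ^ 2 - d1 * d3) / x ^ (2 * n + 2) := by
    field_simp
    ring
  have eden : x ^ 2 * (d1 / x ^ (n + 2)) ^ 2 + (d2 / x ^ (n + 1)) ^ 2
      = (d1 ^ 2 + d2 ^ 2) / x ^ (2 * n + 2) := by
    field_simp
    ring
  rw [enum, eden, div_div_div_comm, div_self hxp, div_one]
end

section
/- Let p be C^k near 0, k ≥ 3, with p' having a zero of order exactly k-1 at 0 (i.e., p'(0)=...=p^{(k-1)}(0)=0, p^{(k)}(0) ≠ 0). Then lim_{φ→0} p'(φ)(p'(φ) + p'''(φ))/(p'(φ)² + p''(φ)²) = (k-2)/(k-1). -/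
open Real Filter Topology

private lemma aux_step {f : ℝ → ℝ} {n : ℕ} (h : ContDiffAt ℝ (n + 1) f 0) :
    (∀ᶠ x in 𝓝 (0 : ℝ), DifferentiableAt ℝ f x) ∧ ContDiffAt ℝ n (deriv f) 0 := by
  obtain ⟨u, hu, hcd⟩ := h.contDiffOn le_rfl (by simp)
  obtain ⟨ε, hε, hball⟩ := Metric.mem_nhds_iff.mp hu
  have hcd' : ContDiffOn ℝ (n + 1) f (Metric.ball (0 : ℝ) ε) := by
    exact_mod_cast hcd.mono hball
  constructor
  · filter_upwards [Metric.ball_mem_nhds (0 : ℝ) hε] with x hx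
    exact ((hcd'.differentiableOn (by simp)).differentiableAt
      (Metric.isOpen_ball.mem_nhds hx))
  · exact ((hcd'.deriv_of_isOpen Metric.isOpen_ball (by exact_mod_cast le_rfl)).contDiffAt
      (Metric.isOpen_ball.mem_nhds (Metric.mem_ball_self hε)))

private lemma key_limit : ∀ (m : ℕ) (f : ℝ → ℝ), ContDiffAt ℝ m f 0 →
    (∀ j < m, iteratedDeriv j f 0 = 0) →
    Filter.Tendsto (fun x => f x / x ^ m) (𝓝[≠] (0 : ℝ))
      (𝓝 (iteratedDeriv m f 0 / (m.factorial : ℝ)))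
  | 0, f, hf, _ => by
      simpa [iteratedDeriv_zero] using
        (hf.continuousAt.tendsto.mono_left nhdsWithin_le_nhds)
  | (m + 1), f, hf, hz => by
      obtain ⟨hdiff, hder⟩ := aux_step (by exact_mod_cast hf)
      have IH := key_limit m (deriv f) hder (fun j hj => by
        rw [← iteratedDeriv_succ']
        exact hz (j + 1) (by omega))
      have hval : iteratedDeriv m (deriv f) 0 = iteratedDeriv (m + 1) f 0 := by
        rw [iteratedDeriv_succ']
      apply deriv.lhopital_zero_nhdsNE (g := fun x : ℝ => x ^ (m + 1))
      · exact hdiff.filter_mono nhdsWithin_le_nhds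
      · filter_upwards [self_mem_nhdsWithin] with x hx
        have hx0 : x ≠ 0 := hx
        rw [deriv_pow_field]
        push_cast
        positivity
      · have hf0 : f 0 = 0 := by
          have := hz 0 (Nat.succ_pos m); simpa [iteratedDeriv_zero] using this
        have : Filter.Tendsto f (𝓝 (0 : ℝ)) (𝓝 (f 0)) := hf.continuousAt.tendsto
        rw [hf0] at this
        exact this.mono_left nhdsWithin_le_nhds
      · have : Filter.Tendsto (fun x : ℝ => x ^ (m + 1)) (𝓝 0) (𝓝 ((0 : ℝ) ^ (m + 1))) :=
          (continuous_pow (m + 1)).tendsto 0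
        rw [zero_pow (Nat.succ_ne_zero m)] at this
        exact this.mono_left nhdsWithin_le_nhds
      · have h2 : Filter.Tendsto (fun x => (deriv f x / x ^ m) / ((m : ℝ) + 1)) (𝓝[≠] (0 : ℝ))
            (𝓝 (iteratedDeriv (m + 1) f 0 / ((m + 1).factorial : ℝ))) := by
          have := IH.div_const ((m : ℝ) + 1)
          rw [hval] at this
          convert this using 2
          rw [Nat.factorial_succ]
          push_cast
          rw [div_div]
          ring_nf
        refine h2.congr' ?_
        filter_upwards [self_mem_nhdsWithin] with x hx
        have hx0 : x ≠ 0 := hx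
        rw [deriv_pow_field]
        push_cast
        rw [div_div]
        ring_nf

theorem limit_winding_integrand
    (p : ℝ → ℝ) (k : ℕ) (hk : 3 ≤ k) (hp : ContDiffAt ℝ k p 0)
    (hzero : ∀ j, 1 ≤ j → j ≤ k - 1 → iteratedDeriv j p 0 = 0)
    (hne : iteratedDeriv k p 0 ≠ 0) :
    Filter.Tendsto
      (fun φ => deriv p φ * (deriv p φ + deriv (deriv (deriv p)) φ)
          / ((deriv p φ) ^ 2 + (deriv (deriv p) φ) ^ 2))
      (nhdsWithin 0 {(0:ℝ)}ᶜ) (nhds (((k : ℝ) - 2) / ((k : ℝ) - 1))) := by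
  obtain ⟨m, rfl⟩ : ∃ m, k = m + 3 := ⟨k - 3, by omega⟩
  set d : ℝ := iteratedDeriv (m + 3) p 0 with hd
  -- regularity of successive derivatives
  obtain ⟨_, hdp⟩ := aux_step (n := m + 2) (by exact_mod_cast hp)
  obtain ⟨_, hddp⟩ := aux_step (n := m + 1) hdp
  obtain ⟨_, hdddp⟩ := aux_step (n := m) hddp
  -- limits of normalized derivatives
  have hA := key_limit (m + 2) (deriv p) hdp (fun j hj => by
    rw [← iteratedDeriv_succ']
    exact hzero (j + 1) (by omega) (by omega))
  have hB := key_limit (m + 1) (deriv (deriv p)) hddp (fun j hj => by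
    rw [← iteratedDeriv_succ', ← iteratedDeriv_succ']
    exact hzero (j + 2) (by omega) (by omega))
  have hC := key_limit m (deriv (deriv (deriv p))) hdddp (fun j hj => by
    rw [← iteratedDeriv_succ', ← iteratedDeriv_succ', ← iteratedDeriv_succ']
    exact hzero (j + 3) (by omega) (by omega))
  have hvA : iteratedDeriv (m + 2) (deriv p) 0 = d := by
    rw [hd]; simp only [iteratedDeriv_succ']
  have hvB : iteratedDeriv (m + 1) (deriv (deriv p)) 0 = d := by
    rw [hd]; simp only [iteratedDeriv_succ']
  have hvC : iteratedDeriv m (deriv (deriv (deriv p))) 0 = d := by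
    rw [hd]; simp only [iteratedDeriv_succ']
  rw [hvA] at hA; rw [hvB] at hB; rw [hvC] at hC
  set a : ℝ := d / ((m + 2).factorial : ℝ) with ha
  set b : ℝ := d / ((m + 1).factorial : ℝ) with hb
  set c : ℝ := d / (m.factorial : ℝ) with hc
  have hb0 : b ≠ 0 := by
    rw [hb]
    exact div_ne_zero hne (by positivity)
  have hx2 : Filter.Tendsto (fun x : ℝ => x ^ 2) (𝓝[≠] (0 : ℝ)) (𝓝 (0 : ℝ)) := by
    have : Filter.Tendsto (fun x : ℝ => x ^ 2) (𝓝 0) (𝓝 ((0 : ℝ) ^ 2)) :=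
      (continuous_pow 2).tendsto 0
    rw [zero_pow two_ne_zero] at this
    exact this.mono_left nhdsWithin_le_nhds
  have hnum : Filter.Tendsto
      (fun x => (deriv p x / x ^ (m + 2)) * (deriv p x / x ^ (m + 2)) * x ^ 2
        + (deriv p x / x ^ (m + 2)) * (deriv (deriv (deriv p)) x / x ^ m))
      (𝓝[≠] (0 : ℝ)) (𝓝 (a * a * 0 + a * c)) := ((hA.mul hA).mul hx2).add (hA.mul hC)
  have hden : Filter.Tendsto
      (fun x => (deriv p x / x ^ (m + 2)) * (deriv p x / x ^ (m + 2)) * x ^ 2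
        + (deriv (deriv p) x / x ^ (m + 1)) * (deriv (deriv p) x / x ^ (m + 1)))
      (𝓝[≠] (0 : ℝ)) (𝓝 (a * a * 0 + b * b)) := ((hA.mul hA).mul hx2).add (hB.mul hB)
  have hden0 : a * a * 0 + b * b ≠ 0 := by
    simpa using mul_ne_zero hb0 hb0
  have hlim := hnum.div hden hden0
  have hvalue : (a * a * 0 + a * c) / (a * a * 0 + b * b)
      = (((m : ℝ) + 3) - 2) / (((m : ℝ) + 3) - 1) := by
    rw [ha, hb, hc]
    have h2 : (((m + 2).factorial : ℕ) : ℝ) = ((m : ℝ) + 2) * ((m + 1).factorial : ℕ) := by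
      rw [Nat.factorial_succ]; push_cast; ring
    have h1 : (((m + 1).factorial : ℕ) : ℝ) = ((m : ℝ) + 1) * (m.factorial : ℕ) := by
      rw [Nat.factorial_succ]; push_cast; ring
    rw [h2, h1]
    have hm0 : (m.factorial : ℝ) ≠ 0 := by positivity
    have hm2 : (m : ℝ) + 2 ≠ 0 := by positivity
    have hm1 : (m : ℝ) + 1 ≠ 0 := by positivity
    simp only [mul_zero, zero_add, div_mul_div_comm]
    have hm3 : ((m : ℝ) + 3 - 1) ≠ 0 := by
      have := Nat.cast_nonneg (α := ℝ) m; intro h; linarith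
    rw [div_div_div_eq,
      div_eq_div_iff (mul_ne_zero (by positivity) (mul_ne_zero hne hne)) hm3]
    ring
  rw [hvalue] at hlim
  have heq : (fun φ => deriv p φ * (deriv p φ + deriv (deriv (deriv p)) φ)
      / ((deriv p φ) ^ 2 + (deriv (deriv p) φ) ^ 2)) =ᶠ[𝓝[≠] (0 : ℝ)]
      (fun x => ((deriv p x / x ^ (m + 2)) * (deriv p x / x ^ (m + 2)) * x ^ 2
        + (deriv p x / x ^ (m + 2)) * (deriv (deriv (deriv p)) x / x ^ m))
        / ((deriv p x / x ^ (m + 2)) * (deriv p x / x ^ (m + 2)) * x ^ 2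
        + (deriv (deriv p) x / x ^ (m + 1)) * (deriv (deriv p) x / x ^ (m + 1)))) := by
    filter_upwards [self_mem_nhdsWithin] with x hx
    have hx0 : x ≠ 0 := hx
    have ht : (x ^ (2 * m + 2) : ℝ) ≠ 0 := pow_ne_zero _ hx0
    have h1 : (deriv p x / x ^ (m + 2)) * (deriv p x / x ^ (m + 2)) * x ^ 2
        + (deriv p x / x ^ (m + 2)) * (deriv (deriv (deriv p)) x / x ^ m)
        = deriv p x * (deriv p x + deriv (deriv (deriv p)) x) / x ^ (2 * m + 2) := by
      field_simp
      ring
    have h2 : (deriv p x / x ^ (m + 2)) * (deriv p x / x ^ (m + 2)) * x ^ 2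
        + (deriv (deriv p) x / x ^ (m + 1)) * (deriv (deriv p) x / x ^ (m + 1))
        = ((deriv p x) ^ 2 + (deriv (deriv p) x) ^ 2) / x ^ (2 * m + 2) := by
      field_simp
      ring
    rw [h1, h2]
    rcases eq_or_ne ((deriv p x) ^ 2 + (deriv (deriv p) x) ^ 2) 0 with h | h
    · simp [h]
    · field_simp
  have := hlim.congr' heq.symm
  convert this using 2
  push_cast
  ring_nf
end

section
/- For the ellipse with semi-axes a > 1 and b = 1, with support function p(φ) = √(a²cos²φ + sin²φ), the equation p'(φ) = tan(α)·p(φ) has exactly four solutions in [0, 2π) whenever 0 ≤ tan(α) < (a²-1)/(2a), i.e., the ellipse has four oblique equilibria with respect to its center for every inclination angle α with tan α < (a²-1)/(2a). -/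
set_option maxHeartbeats 1000000


open Real

private lemma ncard4 {x1 x2 x3 x4 : ℝ} (h12 : x1 ≠ x2) (h13 : x1 ≠ x3) (h14 : x1 ≠ x4)
    (h23 : x2 ≠ x3) (h24 : x2 ≠ x4) (h34 : x3 ≠ x4) :
    ({x1, x2, x3, x4} : Set ℝ).ncard = 4 := by
  rw [Set.ncard_insert_of_notMem (by simp [h12, h13, h14])
      (((Set.finite_singleton x4).insert x3).insert x2),
    Set.ncard_insert_of_notMem (by simp [h23, h24]) ((Set.finite_singleton x4).insert x3),
    Set.ncard_insert_of_notMem (by simp [h34]) (Set.finite_singleton x4),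
    Set.ncard_singleton]

private lemma tan_classify {u φ : ℝ} (hu : u < 0) (hφ0 : 0 ≤ φ) (hφ2 : φ < 2 * π)
    (hcos : Real.cos φ ≠ 0) (ht : Real.tan φ = u) :
    φ = Real.arctan u + π ∨ φ = Real.arctan u + 2 * π := by
  have hπ := Real.pi_pos
  rcases lt_or_ge φ (π / 2) with h | h
  · exfalso
    have hs : 0 ≤ Real.sin φ := Real.sin_nonneg_of_nonneg_of_le_pi hφ0 (by linarith)
    have hc : 0 < Real.cos φ := Real.cos_pos_of_mem_Ioo ⟨by linarith, h⟩
    have h' : 0 ≤ Real.tan φ := by rw [Real.tan_eq_sin_div_cos]; positivity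
    rw [ht] at h'; linarith
  rcases lt_or_ge φ (3 * π / 2) with h2 | h2
  · left
    have h' : φ ≠ π / 2 := by
      intro he; rw [he] at hcos; simp at hcos
    have hlt : π / 2 < φ := lt_of_le_of_ne h (Ne.symm h')
    have harc : Real.arctan u = φ - π := by
      rw [← ht, ← Real.tan_periodic.sub_eq φ]
      exact Real.arctan_tan (by linarith) (by linarith)
    linarith
  · right
    have h' : φ ≠ 3 * π / 2 := by
      intro he
      rw [he, show (3 * π / 2 : ℝ) = π + π / 2 by ring, Real.cos_add] at hcos
      simp at hcos
    have hlt : 3 * π / 2 < φ := lt_of_le_of_ne h2 (Ne.symm h')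
    have harc : Real.arctan u = φ - 2 * π := by
      have hper : Real.tan (φ - 2 * π) = Real.tan φ := by
        rw [show φ - 2 * π = φ - π - π by ring, Real.tan_periodic.sub_eq,
          Real.tan_periodic.sub_eq]
      rw [← ht, ← hper]
      exact Real.arctan_tan (by linarith) (by linarith)
    linarith

private lemma eq_at_arctan {t a u : ℝ} (hroot : t * u ^ 2 + (a ^ 2 - 1) * u + t * a ^ 2 = 0) :
    (1 - a ^ 2) * Real.sin (Real.arctan u) * Real.cos (Real.arctan u) =
      t * (a ^ 2 * Real.cos (Real.arctan u) ^ 2 + Real.sin (Real.arctan u) ^ 2) := by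
  have h1u : (0:ℝ) < 1 + u ^ 2 := by positivity
  have hw2 : Real.sqrt (1 + u ^ 2) ^ 2 = 1 + u ^ 2 := Real.sq_sqrt h1u.le
  have hms : Real.sqrt (1 + u ^ 2) * Real.sqrt (1 + u ^ 2) = 1 + u ^ 2 :=
    Real.mul_self_sqrt h1u.le
  have e1 : Real.sin (Real.arctan u) * Real.cos (Real.arctan u) = u / (1 + u ^ 2) := by
    rw [Real.sin_arctan, Real.cos_arctan, div_mul_div_comm, mul_one, hms]
  have e2 : Real.cos (Real.arctan u) ^ 2 = 1 / (1 + u ^ 2) := by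
    rw [Real.cos_arctan, div_pow, one_pow, hw2]
  have e3 : Real.sin (Real.arctan u) ^ 2 = u ^ 2 / (1 + u ^ 2) := by
    rw [Real.sin_arctan, div_pow, hw2]
  rw [mul_assoc, e1, e2, e3]
  field_simp
  linear_combination -hroot

theorem ellipse_four_oblique_equilibria
    (a : ℝ) (ha : 1 < a)
    (p : ℝ → ℝ)
    (hp : ∀ φ, p φ = Real.sqrt (a ^ 2 * Real.cos φ ^ 2 + Real.sin φ ^ 2))
    (α : ℝ) (h0 : 0 ≤ Real.tan α) (h1 : Real.tan α < (a ^ 2 - 1) / (2 * a)) :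
    {φ ∈ Set.Ico (0:ℝ) (2 * π) | deriv p φ = Real.tan α * p φ}.ncard = 4 := by
  have hπ := Real.pi_pos
  set t := Real.tan α with htdef
  clear_value t
  have ha0 : (0:ℝ) < a := by linarith
  have hq : ∀ φ : ℝ, (1:ℝ) ≤ a ^ 2 * Real.cos φ ^ 2 + Real.sin φ ^ 2 := by
    intro φ
    have h1' : (0:ℝ) ≤ (a ^ 2 - 1) * Real.cos φ ^ 2 :=
      mul_nonneg (by nlinarith) (sq_nonneg _)
    nlinarith [Real.sin_sq_add_cos_sq φ]
  -- the equation is equivalent to a polynomial one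
  have key : ∀ φ, (deriv p φ = t * p φ) ↔
      ((1 - a ^ 2) * Real.sin φ * Real.cos φ
        = t * (a ^ 2 * Real.cos φ ^ 2 + Real.sin φ ^ 2)) := by
    intro φ
    have hpe : p = fun φ => Real.sqrt (a ^ 2 * Real.cos φ ^ 2 + Real.sin φ ^ 2) := funext hp
    have hq1 := hq φ
    have hqnn : (0:ℝ) ≤ a ^ 2 * Real.cos φ ^ 2 + Real.sin φ ^ 2 := by linarith
    have hne : a ^ 2 * Real.cos φ ^ 2 + Real.sin φ ^ 2 ≠ 0 := by linarith
    have hsq : 0 < Real.sqrt (a ^ 2 * Real.cos φ ^ 2 + Real.sin φ ^ 2) :=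
      Real.sqrt_pos.mpr (by linarith)
    have hms := Real.mul_self_sqrt hqnn
    have hqd : HasDerivAt (fun φ => a ^ 2 * Real.cos φ ^ 2 + Real.sin φ ^ 2)
        (2 * (1 - a ^ 2) * Real.sin φ * Real.cos φ) φ := by
      have h1' := (((Real.hasDerivAt_cos φ).pow 2).const_mul (a ^ 2)).add
        ((Real.hasDerivAt_sin φ).pow 2)
      refine h1'.congr_deriv ?_
      push_cast
      ring
    have hpd : HasDerivAt p
        ((1 / (2 * Real.sqrt (a ^ 2 * Real.cos φ ^ 2 + Real.sin φ ^ 2))) *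
          (2 * (1 - a ^ 2) * Real.sin φ * Real.cos φ)) φ := by
      rw [hpe]
      exact (Real.hasDerivAt_sqrt hne).comp φ hqd
    rw [hpd.deriv, hp φ]
    rw [div_mul_eq_mul_div, one_mul, div_eq_iff (by positivity)]
    constructor
    · intro h
      linear_combination h / 2 + t * hms
    · intro h
      linear_combination 2 * h - 2 * t * hms
  have hset : {φ ∈ Set.Ico (0:ℝ) (2 * π) | deriv p φ = t * p φ}
      = {φ ∈ Set.Ico (0:ℝ) (2 * π) |
          (1 - a ^ 2) * Real.sin φ * Real.cos φ
            = t * (a ^ 2 * Real.cos φ ^ 2 + Real.sin φ ^ 2)} := by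
    ext φ; exact and_congr_right fun _ => key φ
  rw [hset]
  have hc32 : Real.cos (3 * π / 2) = 0 := by
    rw [show (3 * π / 2 : ℝ) = π + π / 2 by ring, Real.cos_add]
    simp
  rcases eq_or_lt_of_le h0 with ht0 | ht0
  · -- case t = 0
    have ht0 : t = 0 := ht0.symm
    have hS : {φ ∈ Set.Ico (0:ℝ) (2 * π) |
        (1 - a ^ 2) * Real.sin φ * Real.cos φ
          = t * (a ^ 2 * Real.cos φ ^ 2 + Real.sin φ ^ 2)}
        = ({0, π / 2, π, 3 * π / 2} : Set ℝ) := by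
      ext φ
      simp only [Set.mem_setOf_eq, Set.mem_Ico, Set.mem_insert_iff, Set.mem_singleton_iff, ht0,
        zero_mul]
      constructor
      · rintro ⟨⟨hφ0, hφ2⟩, heq⟩
        have hsc : Real.sin φ * Real.cos φ = 0 := by
          have hne : (1 - a ^ 2) ≠ 0 := by nlinarith
          rcases mul_eq_zero.mp (by rw [mul_assoc] at heq; exact heq) with h | h
          · exact absurd h hne
          · exact h
        have h2 : Real.sin (2 * φ) = 0 := by rw [Real.sin_two_mul]; linarith [hsc]
        obtain ⟨n, hn⟩ := Real.sin_eq_zero_iff.mp h2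
        have hφ : φ = n * π / 2 := by linarith
        have hn0 : (0:ℤ) ≤ n := by
          have : (0:ℝ) ≤ (n:ℝ) := by nlinarith
          exact_mod_cast this
        have hn4 : n < 4 := by
          have : (n:ℝ) < 4 := by nlinarith
          exact_mod_cast this
        interval_cases n
        · left; rw [hφ]; norm_num
        · right; left; rw [hφ]; push_cast; ring
        · right; right; left; rw [hφ]; push_cast; ring
        · right; right; right; rw [hφ]; push_cast; ring
      · rintro (h | h | h | h) <;> subst h
        · exact ⟨⟨by linarith, by linarith⟩, by simp⟩
        · exact ⟨⟨by linarith, by linarith⟩, by simp⟩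
        · exact ⟨⟨by linarith, by linarith⟩, by simp⟩
        · exact ⟨⟨by linarith, by linarith⟩, by simp [hc32]⟩
    rw [hS]
    exact ncard4 (ne_of_lt (by linarith)) (ne_of_lt (by linarith)) (ne_of_lt (by linarith))
      (ne_of_lt (by linarith)) (ne_of_lt (by linarith)) (ne_of_lt (by linarith))
  · -- case 0 < t
    set k := a ^ 2 - 1 with hk
    have hkpos : 0 < k := by nlinarith
    have hat : (0:ℝ) < a * t := mul_pos ha0 ht0
    have hdisc : 0 < k ^ 2 - 4 * a ^ 2 * t ^ 2 := by
      have h1' : t * (2 * a) < k := by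
        rw [lt_div_iff₀ (by positivity)] at h1
        exact h1
      nlinarith [mul_pos (show (0:ℝ) < k - 2 * a * t by nlinarith)
        (show (0:ℝ) < k + 2 * a * t by nlinarith)]
    set D := Real.sqrt (k ^ 2 - 4 * a ^ 2 * t ^ 2) with hDdef
    have hD : 0 < D := Real.sqrt_pos.mpr hdisc
    have hD2 : D ^ 2 = k ^ 2 - 4 * a ^ 2 * t ^ 2 := Real.sq_sqrt hdisc.le
    have hDk : D < k := by nlinarith
    set u1 := (-k - D) / (2 * t) with hu1def
    set u2 := (-k + D) / (2 * t) with hu2def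
    have h2tpos : (0:ℝ) < 2 * t := by linarith
    have h2t : (2 * t) ≠ 0 := h2tpos.ne'
    have hu1 : u1 < 0 := div_neg_of_neg_of_pos (by linarith) h2tpos
    have hu2 : u2 < 0 := div_neg_of_neg_of_pos (by linarith) h2tpos
    have hu12 : u1 < u2 := by
      rw [hu1def, hu2def, div_lt_div_iff₀ h2tpos h2tpos]
      nlinarith
    have he1 : 2 * t * u1 = -k - D := by rw [hu1def]; field_simp
    have he2 : 2 * t * u2 = -k + D := by rw [hu2def]; field_simp
    have hroot1 : t * u1 ^ 2 + k * u1 + t * a ^ 2 = 0 := by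
      have h4 : 4 * t * (t * u1 ^ 2 + k * u1 + t * a ^ 2) = 0 := by
        calc 4 * t * (t * u1 ^ 2 + k * u1 + t * a ^ 2)
            = (2 * t * u1) ^ 2 + 2 * k * (2 * t * u1) + 4 * t ^ 2 * a ^ 2 := by ring
          _ = (-k - D) ^ 2 + 2 * k * (-k - D) + 4 * t ^ 2 * a ^ 2 := by rw [he1]
          _ = D ^ 2 - k ^ 2 + 4 * t ^ 2 * a ^ 2 := by ring
          _ = 0 := by rw [hD2]; ring
      have h4t : (4 * t) ≠ 0 := by positivity
      exact (mul_eq_zero.mp h4).resolve_left h4t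
    have hroot2 : t * u2 ^ 2 + k * u2 + t * a ^ 2 = 0 := by
      have h4 : 4 * t * (t * u2 ^ 2 + k * u2 + t * a ^ 2) = 0 := by
        calc 4 * t * (t * u2 ^ 2 + k * u2 + t * a ^ 2)
            = (2 * t * u2) ^ 2 + 2 * k * (2 * t * u2) + 4 * t ^ 2 * a ^ 2 := by ring
          _ = (-k + D) ^ 2 + 2 * k * (-k + D) + 4 * t ^ 2 * a ^ 2 := by rw [he2]
          _ = D ^ 2 - k ^ 2 + 4 * t ^ 2 * a ^ 2 := by ring
          _ = 0 := by rw [hD2]; ring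
      have h4t : (4 * t) ≠ 0 := by positivity
      exact (mul_eq_zero.mp h4).resolve_left h4t
    have hsum : t * (u1 + u2) = -k := by linear_combination (he1 + he2) / 2
    have hprod : u1 * u2 = a ^ 2 := by
      have h4 : ((2 * t) ^ 2 : ℝ) * (u1 * u2) = (2 * t) ^ 2 * a ^ 2 := by
        calc ((2 * t) ^ 2 : ℝ) * (u1 * u2) = (2 * t * u1) * (2 * t * u2) := by ring
          _ = (-k - D) * (-k + D) := by rw [he1, he2]
          _ = k ^ 2 - D ^ 2 := by ring
          _ = 4 * a ^ 2 * t ^ 2 := by rw [hD2]; ring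
          _ = (2 * t) ^ 2 * a ^ 2 := by ring
      exact mul_left_cancel₀ (pow_ne_zero 2 h2t) h4
    clear_value k D u1 u2
    -- arctan bounds
    have ha1neg : Real.arctan u1 < 0 := by
      calc Real.arctan u1 < Real.arctan 0 := Real.arctan_strictMono hu1
        _ = 0 := Real.arctan_zero
    have ha2neg : Real.arctan u2 < 0 := by
      calc Real.arctan u2 < Real.arctan 0 := Real.arctan_strictMono hu2
        _ = 0 := Real.arctan_zero
    have ha1lb := Real.neg_pi_div_two_lt_arctan u1
    have ha2lb := Real.neg_pi_div_two_lt_arctan u2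
    have ha12 : Real.arctan u1 < Real.arctan u2 := Real.arctan_strictMono hu12
    have hS : {φ ∈ Set.Ico (0:ℝ) (2 * π) |
        (1 - a ^ 2) * Real.sin φ * Real.cos φ
          = t * (a ^ 2 * Real.cos φ ^ 2 + Real.sin φ ^ 2)}
        = ({Real.arctan u1 + π, Real.arctan u2 + π,
            Real.arctan u1 + 2 * π, Real.arctan u2 + 2 * π} : Set ℝ) := by
      ext φ
      simp only [Set.mem_setOf_eq, Set.mem_Ico, Set.mem_insert_iff, Set.mem_singleton_iff]
      constructor
      · rintro ⟨⟨hφ0, hφ2⟩, heq⟩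
        have hcos : Real.cos φ ≠ 0 := by
          intro hc
          have hs2 : Real.sin φ ^ 2 = 1 := by
            have := Real.sin_sq_add_cos_sq φ
            rw [hc] at this; nlinarith
          rw [hc] at heq
          norm_num [hs2] at heq
          linarith
        have hc2 : Real.cos φ ^ 2 ≠ 0 := pow_ne_zero 2 hcos
        have hnum : t * Real.sin φ ^ 2 + k * (Real.sin φ * Real.cos φ)
            + t * a ^ 2 * Real.cos φ ^ 2 = 0 := by
          linear_combination -heq + Real.sin φ * Real.cos φ * hk
        have htu : t * Real.tan φ ^ 2 + k * Real.tan φ + t * a ^ 2 = 0 := by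
          have hexp : t * Real.tan φ ^ 2 + k * Real.tan φ + t * a ^ 2
              = (t * Real.sin φ ^ 2 + k * (Real.sin φ * Real.cos φ)
                  + t * a ^ 2 * Real.cos φ ^ 2) / Real.cos φ ^ 2 := by
            rw [Real.tan_eq_sin_div_cos]
            field_simp
          rw [hexp, hnum, zero_div]
        have hfac : t * (Real.tan φ - u1) * (Real.tan φ - u2) = 0 := by
          linear_combination htu - Real.tan φ * hsum + t * hprod
        have htt : Real.tan φ = u1 ∨ Real.tan φ = u2 := by
          rcases mul_eq_zero.mp hfac with h | h
          · rcases mul_eq_zero.mp h with h' | h'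
            · exact absurd h' ht0.ne'
            · left; linarith
          · right; linarith
        rcases htt with h | h
        · rcases tan_classify hu1 hφ0 hφ2 hcos h with h' | h'
          · left; exact h'
          · right; right; left; exact h'
        · rcases tan_classify hu2 hφ0 hφ2 hcos h with h' | h'
          · right; left; exact h'
          · right; right; right; exact h'
      · have key1 := eq_at_arctan (t := t) (a := a) (u := u1)
          (by rw [← hk]; exact hroot1)
        have key2 := eq_at_arctan (t := t) (a := a) (u := u2)
          (by rw [← hk]; exact hroot2)
        rintro (h | h | h | h) <;> subst h
        · exact ⟨⟨by linarith, by linarith⟩, by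
            rw [Real.sin_add_pi, Real.cos_add_pi]; linear_combination key1⟩
        · exact ⟨⟨by linarith, by linarith⟩, by
            rw [Real.sin_add_pi, Real.cos_add_pi]; linear_combination key2⟩
        · exact ⟨⟨by linarith, by linarith⟩, by
            rw [Real.sin_add_two_pi, Real.cos_add_two_pi]; linear_combination key1⟩
        · exact ⟨⟨by linarith, by linarith⟩, by
            rw [Real.sin_add_two_pi, Real.cos_add_two_pi]; linear_combination key2⟩
    rw [hS]
    exact ncard4 (ne_of_lt (by linarith)) (ne_of_lt (by linarith)) (ne_of_lt (by linarith))
      (ne_of_lt (by linarith)) (ne_of_lt (by linarith)) (ne_of_lt (by linarith))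
end
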